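/- arXiv:0801.0059 — 9 statements merged into one kernel-verified Lean document; each statement's English description precedes it below -/
import Mathlib

section
/- Let k ≥ 2 be an even integer and let x be an integer. Suppose b_1 < b_2 < ... < b_m are integers with b_i + 1 < x for all i, and the b_i are spaced so that b_{i+1} ≥ b_i + 2 (so that x - b_i - 1 ≥ 2i - 1 counting from the largest, i.e., the distances x - b_i - 1 are distinct odd-spaced positive integers ≥ 1). Then the product over i ≤ m ≤ k/2 of (x - b_i)/(x - b_i - 1) is at most ∏_{i=1}^{k/2} (1 + 1/(2i-1)), which is at most 2√k. -/
open Finset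

lemma aux_sq (n : ℕ) :
    (∏ i ∈ Finset.range n, (1 + 1 / (2 * (i : ℝ) + 1)))^2 ≤ 4 * n + 1 := by
  induction n with
  | zero => simp
  | succ n ih =>
    rw [Finset.prod_range_succ, mul_pow]
    have ht : (0:ℝ) < 2 * n + 1 := by positivity
    have h1 : (1 + 1 / (2 * (n:ℝ) + 1))^2 = ((2*n+2)/(2*n+1))^2 := by
      rw [div_pow]
      field_simp
      ring
    have key : (4 * (n:ℝ) + 1) * ((2*n+2)/(2*n+1))^2 ≤ 4 * ((n:ℝ)+1) + 1 := by
      have hq : ((2*(n:ℝ)+2)/(2*n+1))^2 * (2*n+1)^2 = (2*n+2)^2 := by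
        field_simp
      nlinarith [mul_pos ht ht, sq_nonneg ((2*(n:ℝ)+2)/(2*n+1))]
    calc (∏ i ∈ Finset.range n, (1 + 1 / (2 * (i : ℝ) + 1)))^2 * (1 + 1 / (2 * (n:ℝ) + 1))^2
        ≤ (4 * n + 1) * ((2*n+2)/(2*n+1))^2 := by
          rw [h1]; exact mul_le_mul_of_nonneg_right ih (by positivity)
      _ ≤ 4 * ((n:ℝ)+1) + 1 := key
      _ = 4 * ((n+1 : ℕ):ℝ) + 1 := by push_cast; ring

theorem stmt1 (k : ℕ) (hk : 2 ≤ k) (hke : Even k) (x : ℤ) (m : ℕ) (hm : m ≤ k / 2)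
    (b : Fin m → ℤ) (hmono : StrictMono b) (hlt : ∀ i, b i + 1 < x)
    (hspace : ∀ i : Fin m, ∀ h : (i : ℕ) + 1 < m, b ⟨(i : ℕ) + 1, h⟩ ≥ b i + 2) :
    (∏ i, ((x : ℝ) - (b i : ℝ)) / ((x : ℝ) - (b i : ℝ) - 1)) ≤
      (∏ i ∈ Finset.range (k / 2), (1 + 1 / (2 * (i : ℝ) + 1))) ∧
    (∏ i ∈ Finset.range (k / 2), (1 + 1 / (2 * (i : ℝ) + 1))) ≤ 2 * Real.sqrt k := by
  -- key distance estimate in ℤ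
  have hdist : ∀ j : ℕ, ∀ h : j < m, (2 * (j:ℤ) + 1 : ℤ) ≤ x - b ⟨m - 1 - j, by omega⟩ - 1 := by
    intro j
    induction j with
    | zero =>
      intro h
      have := hlt ⟨m - 1 - 0, by omega⟩
      push_cast
      omega
    | succ j ih =>
      intro h
      have h1 : j < m := by omega
      have h2 : m - 1 - (j+1) + 1 < m := by omega
      have hs := hspace ⟨m - 1 - (j+1), by omega⟩ h2
      have heq : (⟨m - 1 - (j+1) + 1, h2⟩ : Fin m) = ⟨m - 1 - j, by omega⟩ := by
        apply Fin.ext; simp; omega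
      rw [heq] at hs
      have := ih h1
      push_cast
      omega
  have hdist' : ∀ i : Fin m, (2 * ((m - 1 - (i:ℕ) : ℕ) : ℤ) + 1 : ℤ) ≤ x - b i - 1 := by
    intro i
    have h := hdist (m - 1 - (i:ℕ)) (by omega)
    simp only [show m - 1 - (m - 1 - (i:ℕ)) = (i:ℕ) from by omega, Fin.eta] at h
    exact h
  constructor
  · -- first part
    have step1 : (∏ i, ((x : ℝ) - (b i : ℝ)) / ((x : ℝ) - (b i : ℝ) - 1)) ≤
        ∏ i : Fin m, (1 + 1 / (2 * ((m - 1 - (i:ℕ) : ℕ) : ℝ) + 1)) := by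
      apply Finset.prod_le_prod
      · intro i _
        have h1 : (1:ℤ) ≤ x - b i - 1 := by have := hlt i; omega
        have h1' : (1:ℝ) ≤ (x:ℝ) - (b i : ℝ) - 1 := by exact_mod_cast h1
        exact div_nonneg (by linarith) (by linarith)
      · intro i _
        have h1 : (1:ℤ) ≤ x - b i - 1 := by have := hlt i; omega
        have h1' : (1:ℝ) ≤ (x:ℝ) - (b i : ℝ) - 1 := by exact_mod_cast h1
        have h2 : (2 * ((m - 1 - (i:ℕ) : ℕ) : ℝ) + 1) ≤ (x:ℝ) - (b i : ℝ) - 1 := by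
          exact_mod_cast hdist' i
        have hd : (0:ℝ) < (x:ℝ) - (b i : ℝ) - 1 := by linarith
        have hpos : (0:ℝ) < 2 * ((m - 1 - (i:ℕ) : ℕ) : ℝ) + 1 := by positivity
        have heq : ((x:ℝ) - (b i : ℝ)) / ((x:ℝ) - (b i : ℝ) - 1)
            = 1 + 1 / ((x:ℝ) - (b i : ℝ) - 1) := by
          field_simp
          ring
        rw [heq]
        have := one_div_le_one_div_of_le hpos h2
        linarith
    have step2 : ∏ i : Fin m, (1 + 1 / (2 * ((m - 1 - (i:ℕ) : ℕ) : ℝ) + 1)) =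
        ∏ j ∈ Finset.range m, (1 + 1 / (2 * (j : ℝ) + 1)) := by
      rw [← Finset.prod_range_reflect (fun j => (1 + 1 / (2 * (j : ℝ) + 1))) m]
      exact Fin.prod_univ_eq_prod_range (fun j => 1 + 1 / (2 * ((m - 1 - j : ℕ) : ℝ) + 1)) m
    have step3 : ∏ j ∈ Finset.range m, (1 + 1 / (2 * (j : ℝ) + 1)) ≤
        ∏ j ∈ Finset.range (k/2), (1 + 1 / (2 * (j : ℝ) + 1)) := by
      rw [← Finset.prod_sdiff (Finset.range_subset_range.mpr hm)]
      have hone : (1:ℝ) ≤ ∏ j ∈ Finset.range (k/2) \ Finset.range m, (1 + 1 / (2 * (j:ℝ) + 1)) := by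
        have := Finset.prod_le_prod (ι := ℕ) (s := Finset.range (k/2) \ Finset.range m)
          (f := fun _ => (1:ℝ)) (g := fun j => (1 + 1 / (2 * (j:ℝ) + 1)))
          (fun _ _ => zero_le_one)
          (fun j _ => by
            have h0 : (0:ℝ) ≤ 1 / (2 * (j:ℝ) + 1) := by positivity
            show (1:ℝ) ≤ 1 + 1 / (2 * (j:ℝ) + 1)
            linarith)
        simpa using this
      have hnn : (0:ℝ) ≤ ∏ j ∈ Finset.range m, (1 + 1 / (2 * (j:ℝ) + 1)) :=
        Finset.prod_nonneg (fun j _ => by positivity)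
      exact le_mul_of_one_le_left hnn hone
    calc (∏ i, ((x : ℝ) - (b i : ℝ)) / ((x : ℝ) - (b i : ℝ) - 1))
        ≤ ∏ i : Fin m, (1 + 1 / (2 * ((m - 1 - (i:ℕ) : ℕ) : ℝ) + 1)) := step1
      _ = ∏ j ∈ Finset.range m, (1 + 1 / (2 * (j : ℝ) + 1)) := step2
      _ ≤ _ := step3
  · -- second part
    have hP : (0:ℝ) ≤ ∏ i ∈ Finset.range (k / 2), (1 + 1 / (2 * (i : ℝ) + 1)) := by
      apply Finset.prod_nonneg
      intro i _
      positivity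
    have hsq := aux_sq (k / 2)
    have hk2 : ((k/2 : ℕ) : ℝ) * 2 = (k : ℝ) := by
      obtain ⟨n, rfl⟩ := hke
      have h : (n + n) / 2 = n := by omega
      rw [h]; push_cast; ring
    have hb : (∏ i ∈ Finset.range (k / 2), (1 + 1 / (2 * (i : ℝ) + 1)))^2 ≤ 4 * k := by
      have hk1 : (2:ℝ) ≤ (k:ℝ) := by exact_mod_cast hk
      nlinarith
    have h4k : (2 * Real.sqrt k)^2 = 4 * k := by
      rw [mul_pow, Real.sq_sqrt (by positivity)]
      ring
    nlinarith [Real.sqrt_nonneg (k:ℝ), hP, hb, h4k]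
end

section
/- Let n, k be positive integers with k even, and let a_1, ..., a_{k/2} be elements of {0, 1, ..., n-1} that are pairwise distinct and satisfy a_i ≠ a_j + 1 for i ≠ j. Define f(x) = ∏_i (x - a_i)(x - a_i - 1) and g(x) = ∏_i (x - a_i)^2. Then for every integer x in {0, ..., n} with f(x) ≠ 0, we have g(x) ≤ 2√k · f(x). -/
open Finset

private noncomputable def Q (t : ℕ) : ℝ := ∏ j ∈ Finset.range t, (2*(j:ℝ)+2)/(2*(j:ℝ)+1)

private lemma Q_pos (t : ℕ) : 0 < Q t := by
  apply Finset.prod_pos; intro j _; positivity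

private lemma Q_zero : Q 0 = 1 := by simp [Q]

private lemma Q_succ (m : ℕ) : Q (m+1) = Q m * ((2*(m:ℝ)+2)/(2*(m:ℝ)+1)) := by
  rw [Q, Q, Finset.prod_range_succ]

private lemma Q_sq_le (m : ℕ) (hm : 1 ≤ m) : Q m ^ 2 ≤ 4 * m := by
  induction m with
  | zero => omega
  | succ m ih =>
    rcases Nat.eq_zero_or_pos m with h0 | h1
    · subst h0; rw [Q_succ, Q_zero]; norm_num
    · have h4 := ih h1
      have hq := Q_pos m
      have hn0 : (0:ℝ) ≤ m := Nat.cast_nonneg m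
      rw [Q_succ, mul_pow, div_pow, ← mul_div_assoc, div_le_iff₀ (by positivity)]
      push_cast
      nlinarith [mul_le_mul_of_nonneg_right h4 (sq_nonneg (2*(m:ℝ)+2)), hq.le]

private lemma ratio_prod_le (m : ℕ) : ∀ (T : Finset ℤ), T.card = m →
    (∀ e ∈ T, 2 ≤ e) → (∀ e ∈ T, ∀ f ∈ T, e ≠ f → 2 ≤ |e - f|) →
    ∏ e ∈ T, (e:ℝ)/((e:ℝ)-1) ≤ Q m := by
  induction m with
  | zero =>
    intro T hT _ _
    rw [Finset.card_eq_zero] at hT; subst hT; simp [Q]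
  | succ m ih =>
    intro T hT h2 hgap
    have hne : T.Nonempty := Finset.card_pos.mp (by omega)
    set M := T.max' hne with hMdef
    have hM : M ∈ T := T.max'_mem hne
    have habs : ∀ e ∈ T, ∀ f ∈ T, e ≠ f → 2 ≤ e - f ∨ 2 ≤ f - e := by
      intro e he f hf hef
      have := le_abs.mp (hgap e he f hf hef)
      omega
    have hcard : 2 * ((m:ℤ) + 1) ≤ M := by
      have hinj : Set.InjOn (fun e => e / 2) (T : Set ℤ) := by
        intro e he f hf hef
        by_contra hne2
        rcases habs e he f hf hne2 with h | h <;> simp only at hef <;> omega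
      have himg : (T.image (fun e => e / 2)).card = T.card :=
        Finset.card_image_of_injOn hinj
      have hsub : T.image (fun e => e / 2) ⊆ Finset.Icc 1 (M / 2) := by
        intro y hy
        rcases Finset.mem_image.mp hy with ⟨e, he, rfl⟩
        have h1 := h2 e he
        have h2' := T.le_max' e he
        rw [Finset.mem_Icc]
        omega
      have := Finset.card_le_card hsub
      rw [himg, hT, Int.card_Icc] at this
      omega
    rw [← Finset.mul_prod_erase T _ hM, Q_succ, mul_comm (Q m)]
    have herase : ∏ e ∈ T.erase M, (e:ℝ)/((e:ℝ)-1) ≤ Q m := by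
      apply ih
      · rw [Finset.card_erase_of_mem hM, hT]; rfl
      · intro e he; exact h2 e (Finset.mem_of_mem_erase he)
      · intro e he f hf hef
        exact hgap e (Finset.mem_of_mem_erase he) f (Finset.mem_of_mem_erase hf) hef
    have hM2 : (2:ℤ) ≤ M := h2 M hM
    have hMr : (2:ℝ) + 2*m ≤ (M:ℝ) := by exact_mod_cast by omega
    have hratio : (M:ℝ)/((M:ℝ)-1) ≤ (2*(m:ℝ)+2)/(2*(m:ℝ)+1) := by
      have hM1 : (0:ℝ) < (M:ℝ) - 1 := by
        have : (2:ℝ) ≤ (M:ℝ) := by exact_mod_cast hM2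
        linarith
      rw [div_le_div_iff₀ hM1 (by positivity)]
      nlinarith
    apply mul_le_mul hratio herase ?_ (by positivity)
    apply Finset.prod_nonneg
    intro e he
    have h1 : (2:ℝ) ≤ (e:ℝ) := by exact_mod_cast h2 e (Finset.mem_of_mem_erase he)
    have : (0:ℝ) < (e:ℝ) - 1 := by linarith
    positivity

theorem stmt3 (n k : ℕ) (hn : 0 < n) (hk : 0 < k) (hke : Even k)
    (a : Fin (k / 2) → ℕ) (ha : ∀ i, a i < n) (hinj : Function.Injective a)
    (hadj : ∀ i j, i ≠ j → a i ≠ a j + 1)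
    (x : ℕ) (hx : x ≤ n)
    (hfx : (∏ i, ((x : ℝ) - (a i : ℝ)) * ((x : ℝ) - (a i : ℝ) - 1)) ≠ 0) :
    (∏ i, ((x : ℝ) - (a i : ℝ)) ^ 2) ≤
      2 * Real.sqrt k * ∏ i, ((x : ℝ) - (a i : ℝ)) * ((x : ℝ) - (a i : ℝ) - 1) := by
  classical
  set d : Fin (k/2) → ℤ := fun i => (x:ℤ) - (a i : ℤ) with hd
  have hcast : ∀ i, ((x:ℝ) - (a i : ℝ)) = ((d i : ℤ) : ℝ) := by
    intro i; simp only [hd]; push_cast; ring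
  have hfac : ∀ i, ((x:ℝ) - (a i:ℝ)) ≠ 0 ∧ ((x:ℝ) - (a i:ℝ) - 1) ≠ 0 := by
    intro i
    exact mul_ne_zero_iff.mp (Finset.prod_ne_zero_iff.mp hfx i (Finset.mem_univ i))
  have hd01 : ∀ i, d i ≠ 0 ∧ d i ≠ 1 := by
    intro i
    obtain ⟨h1, h2⟩ := hfac i
    rw [hcast i] at h1 h2
    refine ⟨by exact_mod_cast h1, fun h => h2 ?_⟩
    rw [h]; norm_num
  have hdinj : Function.Injective d := by
    intro i j hij
    apply hinj
    simp only [hd] at hij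
    omega
  have hfacpos : ∀ i, (1:ℝ) ≤ ((x:ℝ) - (a i:ℝ)) * ((x:ℝ) - (a i:ℝ) - 1) := by
    intro i
    have h := hd01 i
    have hint : (1:ℤ) ≤ d i * (d i - 1) := by
      rcases lt_or_ge (d i) 0 with hlt | hge
      · have h1 : d i ≤ -1 := by omega
        nlinarith
      · have h1 : 2 ≤ d i := by omega
        nlinarith
    rw [hcast i]
    calc (1:ℝ) ≤ ((d i * (d i - 1) : ℤ) : ℝ) := by exact_mod_cast hint
      _ = (d i : ℝ) * ((d i : ℝ) - 1) := by push_cast; ring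
  have hFpos : 0 < ∏ i, ((x:ℝ) - (a i:ℝ)) * ((x:ℝ) - (a i:ℝ) - 1) :=
    Finset.prod_pos fun i _ => lt_of_lt_of_le one_pos (hfacpos i)
  have hg : (∏ i, ((x:ℝ) - (a i:ℝ)) ^ 2)
      = (∏ i, ((x:ℝ) - (a i:ℝ)) * ((x:ℝ) - (a i:ℝ) - 1)) *
        ∏ i, (d i : ℝ)/((d i : ℝ) - 1) := by
    rw [← Finset.prod_mul_distrib]
    apply Finset.prod_congr rfl
    intro i _
    have hne1 : ((d i : ℝ)) - 1 ≠ 0 := by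
      intro h
      exact (hd01 i).2 (by exact_mod_cast sub_eq_zero.mp h)
    rw [hcast i]
    field_simp
  rw [hg, mul_comm (2 * Real.sqrt k)]
  apply mul_le_mul_of_nonneg_left ?_ hFpos.le
  -- now: ∏ i, ratio ≤ 2 * sqrt k
  set S : Finset (Fin (k/2)) := Finset.univ.filter (fun i => 2 ≤ d i) with hS
  set T : Finset ℤ := S.image d with hT
  have hTcard : T.card ≤ k := by
    have h1 : T.card = S.card := Finset.card_image_of_injective S hdinj
    have h2 : S.card ≤ k / 2 := le_trans (Finset.card_le_card (Finset.filter_subset _ _))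
      (by simp)
    omega
  have hQle : Q T.card ≤ 2 * Real.sqrt k := by
    have hsk : (1:ℝ) ≤ Real.sqrt k := by
      rw [show (1:ℝ) = Real.sqrt 1 by simp]
      exact Real.sqrt_le_sqrt (by exact_mod_cast hk)
    rcases Nat.eq_zero_or_pos T.card with h0 | h1
    · rw [h0, Q_zero]; linarith
    · have h := Q_sq_le T.card h1
      have hq := (Q_pos T.card).le
      have h2 : Q T.card / 2 ≤ Real.sqrt k := by
        have hrw : Q T.card / 2 = Real.sqrt ((Q T.card / 2)^2) :=
          (Real.sqrt_sq (by positivity)).symm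
        rw [hrw]
        apply Real.sqrt_le_sqrt
        have hkc : ((T.card : ℝ)) ≤ (k:ℝ) := by exact_mod_cast hTcard
        nlinarith
      linarith
  have hsplit : (∏ i, (d i : ℝ)/((d i : ℝ) - 1))
      ≤ ∏ i ∈ S, (d i : ℝ)/((d i : ℝ) - 1) := by
    rw [← Finset.prod_filter_mul_prod_filter_not Finset.univ (fun i => 2 ≤ d i)
      (fun i => (d i : ℝ)/((d i : ℝ) - 1))]
    have hA : (0:ℝ) ≤ ∏ i ∈ S, (d i : ℝ)/((d i : ℝ) - 1) := by
      apply Finset.prod_nonneg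
      intro i hi
      have : 2 ≤ d i := (Finset.mem_filter.mp hi).2
      have h1 : (2:ℝ) ≤ (d i : ℝ) := by exact_mod_cast this
      have : (0:ℝ) < (d i : ℝ) - 1 := by linarith
      positivity
    have hB : (∏ i ∈ Finset.univ.filter (fun i => ¬ 2 ≤ d i),
        (d i : ℝ)/((d i : ℝ) - 1)) ≤ 1 := by
      apply Finset.prod_le_one
      · intro i hi
        have hlt : d i ≤ -1 := by
          have := (Finset.mem_filter.mp hi).2
          have := hd01 i
          omega
        have h1 : (d i : ℝ) ≤ -1 := by exact_mod_cast hlt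
        rw [div_nonneg_iff]
        right
        constructor <;> linarith
      · intro i hi
        have hlt : d i ≤ -1 := by
          have := (Finset.mem_filter.mp hi).2
          have := hd01 i
          omega
        have h1 : (d i : ℝ) ≤ -1 := by exact_mod_cast hlt
        rw [div_le_one_iff]
        right; right
        constructor <;> linarith
    calc (∏ i ∈ S, (d i : ℝ)/((d i : ℝ) - 1)) *
          ∏ i ∈ Finset.univ.filter (fun i => ¬ 2 ≤ d i), (d i : ℝ)/((d i : ℝ) - 1)
        ≤ (∏ i ∈ S, (d i : ℝ)/((d i : ℝ) - 1)) * 1 :=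
          mul_le_mul_of_nonneg_left hB hA
      _ = _ := mul_one _
  have himg : (∏ i ∈ S, (d i : ℝ)/((d i : ℝ) - 1)) = ∏ e ∈ T, (e:ℝ)/((e:ℝ)-1) := by
    rw [hT, Finset.prod_image]
    intro i _ j _ hij
    exact hdinj hij
  have hmain : (∏ e ∈ T, (e:ℝ)/((e:ℝ)-1)) ≤ Q T.card := by
    apply ratio_prod_le T.card T rfl
    · intro e he
      rcases Finset.mem_image.mp he with ⟨i, hi, rfl⟩
      exact (Finset.mem_filter.mp hi).2
    · intro e he f hf hef
      rcases Finset.mem_image.mp he with ⟨i, hi, rfl⟩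
      rcases Finset.mem_image.mp hf with ⟨j, hj, rfl⟩
      have hij : i ≠ j := fun h => hef (by rw [h])
      have h1 : a i ≠ a j + 1 := hadj i j hij
      have h2 : a j ≠ a i + 1 := hadj j i hij.symm
      have h3 : a i ≠ a j := fun h => hij (hinj h)
      simp only [hd]
      rw [le_abs]
      omega
  linarith [hsplit, himg ▸ hmain]
end

section
/- Let M be a positive integer and let G be a monic real polynomial of degree d with 0 ≤ d ≤ M/2. Then max over i in {0, 1, ..., M-1} of |G(i)| is at least M^d · 4^{-(d+1/2)} · exp(-d^3/M^2). -/
open Finset Polynomial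

noncomputable def fwdP (q : Polynomial ℝ) : Polynomial ℝ := q.comp (X + 1) - q

def dfd (f : ℕ → ℝ) : ℕ → ℝ := fun x => f (x + 1) - f x

lemma fwdP_eval (q : Polynomial ℝ) (x : ℝ) : (fwdP q).eval x = q.eval (x + 1) - q.eval x := by
  simp [fwdP]

lemma fwdP_zero : fwdP 0 = 0 := by simp [fwdP]

lemma coeff_comp_X_add_one (q : Polynomial ℝ) (N j : ℕ) (hN : q.natDegree < N) :
    (q.comp (X + 1)).coeff j = ∑ i ∈ range N, q.coeff i * (i.choose j) := by
  rw [Polynomial.comp_eq_sum_left,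
    Polynomial.sum_over_range' q (fun n => by simp) N hN]
  rw [Polynomial.finset_sum_coeff]
  refine Finset.sum_congr rfl fun i _ => ?_
  rw [Polynomial.coeff_C_mul, Polynomial.coeff_X_add_one_pow]

lemma fwdP_coeff (q : Polynomial ℝ) (m : ℕ) (h : q.natDegree ≤ m + 1) :
    (fwdP q).coeff m = (m + 1 : ℝ) * q.coeff (m + 1) := by
  rw [fwdP, Polynomial.coeff_sub, coeff_comp_X_add_one q (m+2) m (by omega)]
  rw [Finset.sum_range_succ, Finset.sum_range_succ]
  rw [Finset.sum_eq_zero (fun i hi => by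
    rw [Finset.mem_range] at hi
    rw [Nat.choose_eq_zero_of_lt hi]; ring)]
  rw [Nat.choose_self, Nat.choose_succ_self_right]
  push_cast; ring

lemma fwdP_natDegree (q : Polynomial ℝ) (m : ℕ) (h : q.natDegree ≤ m + 1) :
    (fwdP q).natDegree ≤ m := by
  rw [Polynomial.natDegree_le_iff_coeff_eq_zero]
  intro N hN
  obtain ⟨k, rfl⟩ : ∃ k, N = k + 1 := ⟨N - 1, by omega⟩
  rw [fwdP_coeff q (k+1) (by omega), Polynomial.coeff_eq_zero_of_natDegree_lt (by omega)]
  ring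

lemma fwdP_iter_natDegree : ∀ (k : ℕ) (q : Polynomial ℝ) (n : ℕ),
    q.natDegree ≤ n + k → (fwdP^[k] q).natDegree ≤ n
  | 0, q, n, h => by simpa using h
  | k+1, q, n, h => by
    rw [Function.iterate_succ_apply]
    exact fwdP_iter_natDegree k (fwdP q) n (fwdP_natDegree q (n+k) (by omega))

lemma fwdP_iter_coeff : ∀ (k : ℕ) (q : Polynomial ℝ) (n : ℕ),
    q.natDegree ≤ n + k →
    (fwdP^[k] q).coeff n = ((n+k).descFactorial k : ℝ) * q.coeff (n+k)
  | 0, q, n, h => by simp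
  | k+1, q, n, h => by
    rw [Function.iterate_succ_apply,
      fwdP_iter_coeff k (fwdP q) n (fwdP_natDegree q (n+k) (by omega)),
      fwdP_coeff q (n+k) (by omega)]
    have : (n+(k+1)).descFactorial (k+1) = (n+k+1) * (n+k).descFactorial k := by
      exact Nat.succ_descFactorial_succ (n+k) k
    rw [show n + (k+1) = n + k + 1 from rfl] at *
    rw [this]
    push_cast; ring

lemma fwdP_iter_eq_zero : ∀ (m : ℕ) (q : Polynomial ℝ), q.natDegree ≤ m → fwdP^[m+1] q = 0
  | 0, q, h => by
    have : q = C (q.coeff 0) := Polynomial.eq_C_of_natDegree_le_zero h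
    rw [Function.iterate_one, this, fwdP, Polynomial.C_comp, sub_self]
  | m+1, q, h => by
    rw [Function.iterate_succ_apply]
    exact fwdP_iter_eq_zero m (fwdP q) (fwdP_natDegree q m h)

lemma fwdP_iter_eq_zero' (k : ℕ) (q : Polynomial ℝ) (h1 : q.natDegree ≤ k) (h2 : q.coeff k = 0) :
    fwdP^[k] q = 0 := by
  by_cases hq : q = 0
  · rw [hq]; exact Function.iterate_fixed fwdP_zero k
  · have hlt : q.natDegree < k := by
      rcases lt_or_eq_of_le h1 with h | h
      · exact h
      · exfalso
        rw [← h] at h2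
        exact hq (Polynomial.leadingCoeff_eq_zero.mp h2)
    obtain ⟨r, hr⟩ : ∃ r, k = (q.natDegree + 1) + r := ⟨k - q.natDegree - 1, by omega⟩
    rw [hr, add_comm, Function.iterate_add_apply, fwdP_iter_eq_zero q.natDegree q le_rfl]
    exact Function.iterate_fixed fwdP_zero r

lemma dfd_iter_eval (q : Polynomial ℝ) : ∀ (k : ℕ) (x : ℕ),
    dfd^[k] (fun y : ℕ => q.eval (y : ℝ)) x = (fwdP^[k] q).eval (x : ℝ)
  | 0, x => by simp
  | k+1, x => by
    rw [Function.iterate_succ_apply']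
    show dfd^[k] _ (x+1) - dfd^[k] _ x = _
    rw [dfd_iter_eval q k (x+1), dfd_iter_eval q k x, Function.iterate_succ_apply', fwdP_eval]
    push_cast; ring

noncomputable def FF (M d : ℕ) : Polynomial ℝ :=
  (∏ j ∈ range d, (X - C (j : ℝ))) * ∏ j ∈ range d, (X - C ((M : ℝ) + j))

lemma FF_monic (M d : ℕ) : (FF M d).Monic := by
  apply Polynomial.Monic.mul <;>
  · apply Polynomial.monic_prod_of_monic
    intro j _
    exact Polynomial.monic_X_sub_C _

lemma FF_natDegree (M d : ℕ) : (FF M d).natDegree = 2 * d := by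
  rw [FF, Polynomial.Monic.natDegree_mul (by
      apply Polynomial.monic_prod_of_monic; intro j _; exact Polynomial.monic_X_sub_C _)
    (by apply Polynomial.monic_prod_of_monic; intro j _; exact Polynomial.monic_X_sub_C _)]
  rw [Polynomial.natDegree_prod _ _ (fun j _ => Polynomial.X_sub_C_ne_zero _),
      Polynomial.natDegree_prod _ _ (fun j _ => Polynomial.X_sub_C_ne_zero _)]
  simp only [Polynomial.natDegree_X_sub_C, Finset.sum_const, Finset.card_range, smul_eq_mul,
    mul_one]
  ring

lemma FF_eval (M d : ℕ) (y : ℝ) :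
    (FF M d).eval y = (∏ j ∈ range d, (y - j)) * ∏ j ∈ range d, (y - (M + j)) := by
  simp [FF, Polynomial.eval_prod]

lemma FF_eval_zero_low (M d : ℕ) (x : ℕ) (hx : x < d) : (FF M d).eval (x : ℝ) = 0 := by
  rw [FF_eval]
  apply mul_eq_zero_of_left
  exact Finset.prod_eq_zero (Finset.mem_range.mpr hx) (by simp)

lemma FF_eval_zero_high (M d : ℕ) (x : ℕ) (hx1 : M ≤ x) (hx2 : x < M + d) :
    (FF M d).eval (x : ℝ) = 0 := by
  rw [FF_eval]
  apply mul_eq_zero_of_right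
  refine Finset.prod_eq_zero (Finset.mem_range.mpr (show x - M < d by omega)) ?_
  have : ((x - M : ℕ) : ℝ) = (x : ℝ) - M := by
    push_cast [hx1]; ring
  rw [this]; ring

-- vanishing of iterated differences
lemma FF_fwd_vanish (M d : ℕ) : ∀ (k x : ℕ),
    (k + x < d ∨ (M ≤ x ∧ k + x < M + d)) → (fwdP^[k] (FF M d)).eval (x : ℝ) = 0
  | 0, x, h => by
    rcases h with h | ⟨h1, h2⟩
    · exact FF_eval_zero_low M d x (by omega)
    · exact FF_eval_zero_high M d x h1 (by omega)
  | k+1, x, h => by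
    rw [Function.iterate_succ_apply', fwdP_eval]
    have e1 : (fwdP^[k] (FF M d)).eval ((x : ℝ) + 1) = 0 := by
      have := FF_fwd_vanish M d k (x+1) (by omega)
      push_cast at this
      convert this using 2
    have e2 : (fwdP^[k] (FF M d)).eval (x : ℝ) = 0 := FF_fwd_vanish M d k x (by omega)
    rw [e1, e2, sub_zero]

-- single Abel summation
lemma abel_step (g h : ℕ → ℝ) (M : ℕ) (h0 : g 0 = 0) (hM : g M = 0) :
    ∑ x ∈ range M, (g (x+1) - g x) * h x = -∑ x ∈ range M, g (x+1) * (h (x+1) - h x) := by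
  have tele : ∑ x ∈ range M, (g (x+1) * h (x+1) - g x * h x) = g M * h M - g 0 * h 0 :=
    Finset.sum_range_sub (fun x => g x * h x) M
  rw [h0, hM] at tele
  have expand : ∀ x, (g (x+1) - g x) * h x = (g (x+1) * h (x+1) - g x * h x) - g (x+1) * (h (x+1) - h x) := by
    intro x; ring
  calc ∑ x ∈ range M, (g (x+1) - g x) * h x
      = ∑ x ∈ range M, ((g (x+1) * h (x+1) - g x * h x) - g (x+1) * (h (x+1) - h x)) := by
        exact Finset.sum_congr rfl fun x _ => expand x
    _ = (∑ x ∈ range M, (g (x+1) * h (x+1) - g x * h x)) - ∑ x ∈ range M, g (x+1) * (h (x+1) - h x) := by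
        rw [Finset.sum_sub_distrib]
    _ = -∑ x ∈ range M, g (x+1) * (h (x+1) - h x) := by rw [tele]; ring

noncomputable def pp (M d : ℕ) : Polynomial ℝ := fwdP^[d] (FF M d)

lemma abel_iter (M d : ℕ) (h : ℕ → ℝ) : ∀ (j : ℕ), j ≤ d →
    ∑ x ∈ range M, (pp M d).eval (x : ℝ) * h x
      = (-1 : ℝ)^j * ∑ x ∈ range M, (fwdP^[d-j] (FF M d)).eval ((x + j : ℕ) : ℝ) * (dfd^[j] h) x
  | 0, _ => by simp [pp]
  | j+1, hj => by
    have IH := abel_iter M d h j (by omega)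
    set g : ℕ → ℝ := fun x => (fwdP^[d-(j+1)] (FF M d)).eval ((x + j : ℕ) : ℝ) with hg
    have hdj : d - j = (d - (j+1)) + 1 := by omega
    have key : ∀ x : ℕ, (fwdP^[d-j] (FF M d)).eval ((x + j : ℕ) : ℝ) = g (x+1) - g x := by
      intro x
      show _ = (fwdP^[d-(j+1)] (FF M d)).eval ((x + 1 + j : ℕ) : ℝ)
        - (fwdP^[d-(j+1)] (FF M d)).eval ((x + j : ℕ) : ℝ)
      rw [hdj, Function.iterate_succ_apply', fwdP_eval]
      have : ((x + 1 + j : ℕ) : ℝ) = ((x + j : ℕ) : ℝ) + 1 := by push_cast; ring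
      rw [this]
    have hg0 : g 0 = 0 := by
      rw [hg]
      exact FF_fwd_vanish M d (d-(j+1)) (0 + j) (Or.inl (by omega))
    have hgM : g M = 0 := by
      rw [hg]
      exact FF_fwd_vanish M d (d-(j+1)) (M + j) (Or.inr ⟨by omega, by omega⟩)
    have step := abel_step g (dfd^[j] h) M hg0 hgM
    rw [IH, Finset.sum_congr rfl (fun x _ => by rw [key x]), step]
    rw [show -∑ x ∈ range M, g (x+1) * (dfd^[j] h (x+1) - dfd^[j] h x)
        = -∑ x ∈ range M, (fwdP^[d-(j+1)] (FF M d)).eval ((x + (j+1) : ℕ) : ℝ) * (dfd^[j+1] h) x from by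
      congr 1
      refine Finset.sum_congr rfl fun x _ => ?_
      rw [Function.iterate_succ_apply']
      have : x + 1 + j = x + (j + 1) := by omega
      rw [hg]
      simp only []
      rw [this]
      rfl]
    ring

lemma sum_pp_mul (M d : ℕ) (q : Polynomial ℝ) :
    ∑ x ∈ range M, (pp M d).eval (x : ℝ) * q.eval (x : ℝ)
      = (-1 : ℝ)^d * ∑ x ∈ range M, (FF M d).eval ((x + d : ℕ) : ℝ) * (fwdP^[d] q).eval (x : ℝ) := by
  have := abel_iter M d (fun y : ℕ => q.eval (y : ℝ)) d le_rfl
  rw [Nat.sub_self] at this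
  rw [this]
  congr 1
  refine Finset.sum_congr rfl fun x _ => ?_
  rw [dfd_iter_eval q d x]
  rfl

lemma sum_pp_orth (M d : ℕ) (q : Polynomial ℝ) (hq : fwdP^[d] q = 0) :
    ∑ x ∈ range M, (pp M d).eval (x : ℝ) * q.eval (x : ℝ) = 0 := by
  rw [sum_pp_mul, hq]
  simp

lemma fwdP_iter_FF (M d : ℕ) : fwdP^[2*d] (FF M d) = C (((2*d).factorial : ℝ)) := by
  have hdeg : (fwdP^[2*d] (FF M d)).natDegree ≤ 0 :=
    fwdP_iter_natDegree (2*d) _ 0 (by rw [FF_natDegree]; omega)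
  have hco : (fwdP^[2*d] (FF M d)).coeff 0 = ((2*d).factorial : ℝ) := by
    have := fwdP_iter_coeff (2*d) (FF M d) 0 (by rw [FF_natDegree]; omega)
    rw [this]
    have h1 : (FF M d).coeff (0 + 2*d) = 1 := by
      have := (FF_monic M d).coeff_natDegree
      rwa [FF_natDegree, zero_add] at *
    rw [h1, Nat.zero_add, Nat.descFactorial_self, mul_one]
  rw [Polynomial.eq_C_of_natDegree_le_zero hdeg, hco]

lemma fwdP_iter_pp (M d : ℕ) : fwdP^[d] (pp M d) = C (((2*d).factorial : ℝ)) := by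
  rw [pp, ← Function.iterate_add_apply, show d + d = 2*d by ring, fwdP_iter_FF]

lemma sum_pp_sq (M d : ℕ) :
    ∑ x ∈ range M, ((pp M d).eval (x : ℝ))^2
      = ((2*d).factorial : ℝ) * ∑ x ∈ range M, (-1 : ℝ)^d * (FF M d).eval ((x + d : ℕ) : ℝ) := by
  have h1 : ∑ x ∈ range M, ((pp M d).eval (x : ℝ))^2
      = ∑ x ∈ range M, (pp M d).eval (x : ℝ) * (pp M d).eval (x : ℝ) := by
    refine Finset.sum_congr rfl fun x _ => ?_; ring
  rw [h1, sum_pp_mul M d (pp M d), fwdP_iter_pp, Finset.mul_sum, Finset.mul_sum]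
  refine Finset.sum_congr rfl fun x _ => ?_
  rw [Polynomial.eval_C]
  ring

lemma cast_descFactorial (n : ℕ) : ∀ (k : ℕ),
    ((n.descFactorial k : ℕ) : ℝ) = ∏ j ∈ range k, ((n : ℝ) - j)
  | 0 => by simp
  | k+1 => by
    rw [Nat.descFactorial_succ, Finset.prod_range_succ, ← cast_descFactorial n k]
    by_cases hnk : k ≤ n
    · rw [Nat.cast_mul, Nat.cast_sub hnk]; ring
    · have h1 : n.descFactorial k = 0 := Nat.descFactorial_of_lt (by omega)
      rw [h1]
      simp

lemma FF_eval_shift (M d x : ℕ) (hx : x < M) :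
    (-1 : ℝ)^d * (FF M d).eval ((x + d : ℕ) : ℝ)
      = (((x+d).descFactorial d : ℕ) : ℝ) * (((M-1-x).descFactorial d : ℕ) : ℝ) := by
  rw [FF_eval, cast_descFactorial, cast_descFactorial]
  have e1 : ∏ j ∈ range d, (((x + d : ℕ) : ℝ) - j) = ∏ j ∈ range d, (((x+d : ℕ) : ℝ) - j) := rfl
  have e2 : (-1 : ℝ)^d * ∏ j ∈ range d, (((x + d : ℕ) : ℝ) - ((M : ℝ) + j))
      = ∏ j ∈ range d, (((M - 1 - x : ℕ) : ℝ) - j) := by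
    have cast1 : ((M - 1 - x : ℕ) : ℝ) = (M : ℝ) - 1 - x := by
      have h : M - 1 - x + (x + 1) = M := by omega
      have h2 := congrArg (fun n : ℕ => (n : ℝ)) h
      push_cast at h2
      linarith
    rw [← Finset.prod_range_reflect (fun j => ((M - 1 - x : ℕ) : ℝ) - j) d]
    rw [show (-1:ℝ)^d = ∏ _j ∈ range d, (-1 : ℝ) by rw [Finset.prod_const, Finset.card_range],
      ← Finset.prod_mul_distrib]
    refine Finset.prod_congr rfl fun j hj => ?_
    rw [Finset.mem_range] at hj
    have cast2 : ((d - 1 - j : ℕ) : ℝ) = (d : ℝ) - 1 - j := by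
      have h : d - 1 - j + (j + 1) = d := by omega
      have h2 := congrArg (fun n : ℕ => (n : ℝ)) h
      push_cast at h2
      linarith
    rw [cast1, cast2]
    push_cast
    ring
  calc (-1 : ℝ)^d * ((∏ j ∈ range d, (((x + d : ℕ) : ℝ) - j)) * ∏ j ∈ range d, (((x + d : ℕ) : ℝ) - ((M:ℝ) + j)))
      = (∏ j ∈ range d, (((x + d : ℕ) : ℝ) - j)) * ((-1:ℝ)^d * ∏ j ∈ range d, (((x + d : ℕ) : ℝ) - ((M:ℝ) + j))) := by ring
    _ = _ := by rw [e2]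

lemma hockey (b : ℕ) : ∀ (n : ℕ), ∑ x ∈ range (n+1), (x+b).choose b = (n+b+1).choose (b+1)
  | 0 => by simp
  | n+1 => by
    rw [Finset.sum_range_succ, hockey b n,
      show n+1+b+1 = n+b+1+1 by omega, show n+1+b = n+b+1 by omega,
      Nat.choose_succ_succ (n+b+1) b]
    simp only [Nat.succ_eq_add_one]
    omega

lemma Tconv : ∀ (b a n : ℕ),
    ∑ x ∈ range (n+1), (x+a).choose a * ((n-x)+b).choose b = (n+a+b+1).choose (a+b+1) := by
  intro b
  induction b with
  | zero =>
    intro a n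
    simp only [Nat.add_zero, Nat.choose_zero_right, Nat.mul_one]
    exact hockey a n
  | succ b ihb =>
    intro a
    intro n
    induction n with
    | zero => simp
    | succ n ihn =>
      have pascal : ∀ x ∈ range (n+1),
          (x+a).choose a * ((n+1-x)+(b+1)).choose (b+1)
            = (x+a).choose a * ((n-x)+(b+1)).choose (b+1) + (x+a).choose a * (((n+1-x))+b).choose b := by
        intro x hx
        rw [Finset.mem_range] at hx
        have hC : ((n+1-x)+(b+1)).choose (b+1)
            = ((n-x)+(b+1)).choose (b+1) + ((n+1-x)+b).choose b := by
          rw [show (n+1-x)+(b+1) = ((n-x)+b+1)+1 by omega,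
              show (n-x)+(b+1) = (n-x)+b+1 by omega,
              show (n+1-x)+b = (n-x)+b+1 by omega,
              Nat.choose_succ_succ ((n-x)+b+1) b]
          simp only [Nat.succ_eq_add_one]
          omega
        rw [hC, Nat.mul_add]
      have main : ∑ x ∈ range (n+2), (x+a).choose a * ((n+1-x)+(b+1)).choose (b+1)
          = (∑ x ∈ range (n+1), (x+a).choose a * ((n-x)+(b+1)).choose (b+1))
            + ∑ x ∈ range (n+2), (x+a).choose a * ((n+1-x)+b).choose b := by
        rw [Finset.sum_range_succ, Finset.sum_congr rfl pascal, Finset.sum_add_distrib]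
        rw [Finset.sum_range_succ (fun x => (x+a).choose a * ((n+1-x)+b).choose b) (n+1)]
        simp only [Nat.sub_self, Nat.zero_add, Nat.choose_self]
        omega
      have ihb' := ihb a (n+1)
      rw [show n+1+1 = n+2 by omega] at ihb'
      rw [main, ihn, ihb']
      have c1 : (n+a+(b+1)+1).choose (a+(b+1)+1) = (n+a+b+2).choose (a+b+1+1) := by
        congr 1 <;> omega
      have c2 : (n+1+a+b+1).choose (a+b+1) = (n+a+b+2).choose (a+b+1) := by
        congr 1
        omega
      have c3 : (n+1+a+(b+1)+1).choose (a+(b+1)+1) = (n+a+b+2+1).choose (a+b+1+1) := by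
        congr 1 <;> omega
      rw [c1, c2, c3, Nat.choose_succ_succ (n+a+b+2) (a+b+1)]
      simp only [Nat.succ_eq_add_one]
      omega

lemma conv_desc (M d : ℕ) (hMd : d + 1 ≤ M) :
    ∑ x ∈ range M, (x+d).descFactorial d * (M-1-x).descFactorial d
      = d.factorial * d.factorial * ((M+d).choose (2*d+1)) := by
  have step1 : ∀ x, (x+d).descFactorial d * (M-1-x).descFactorial d
      = d.factorial * d.factorial * ((x+d).choose d * (M-1-x).choose d) := by
    intro x
    rw [Nat.descFactorial_eq_factorial_mul_choose, Nat.descFactorial_eq_factorial_mul_choose]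
    ring
  rw [Finset.sum_congr rfl (fun x _ => step1 x), ← Finset.mul_sum]
  congr 1
  -- drop zero terms
  have hsub : range (M - d) ⊆ range M := by
    apply Finset.range_subset_range.mpr; omega
  rw [← Finset.sum_subset hsub (fun x hx1 hx2 => by
    rw [Finset.mem_range] at hx1
    rw [Finset.mem_range, not_lt] at hx2
    have : M - 1 - x < d := by omega
    rw [Nat.choose_eq_zero_of_lt this, Nat.mul_zero])]
  have hM1 : M - d = (M - d - 1) + 1 := by omega
  rw [hM1]
  have step2 : ∀ x ∈ range ((M-d-1)+1), (x+d).choose d * (M-1-x).choose d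
      = (x+d).choose d * (((M-d-1)-x)+d).choose d := by
    intro x hx
    rw [Finset.mem_range] at hx
    congr 2
    omega
  rw [Finset.sum_congr rfl step2, Tconv d d (M-d-1)]
  congr 1 <;> omega

lemma pp_natDegree (M d : ℕ) : (pp M d).natDegree ≤ d :=
  fwdP_iter_natDegree d (FF M d) d (by rw [FF_natDegree]; omega)

lemma pp_coeff (M d : ℕ) : (pp M d).coeff d = (((2*d).descFactorial d : ℕ) : ℝ) := by
  rw [pp, fwdP_iter_coeff d (FF M d) d (by rw [FF_natDegree]; omega)]
  have h1 : (FF M d).coeff (d + d) = 1 := by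
    have := (FF_monic M d).coeff_natDegree
    rwa [FF_natDegree, show 2*d = d + d by ring] at this
  rw [h1, mul_one, show d + d = 2*d by ring]

lemma descFact_cast (d : ℕ) : (((2*d).descFactorial d : ℕ) : ℝ) = ((2*d).factorial : ℝ) / (d.factorial : ℝ) := by
  have h := Nat.factorial_mul_descFactorial (show d ≤ 2*d by omega)
  rw [show 2*d - d = d by omega] at h
  have := congrArg (fun n : ℕ => (n : ℝ)) h
  push_cast at this
  field_simp
  linarith

lemma cor55 (M d : ℕ) (hMd : d + 1 ≤ M) (G : Polynomial ℝ) (hmonic : G.Monic)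
    (hdeg : G.natDegree = d) :
    ((d.factorial : ℝ))^4 * (((M+d).choose (2*d+1) : ℕ) : ℝ) / ((2*d).factorial : ℝ)
      ≤ ∑ x ∈ range M, (G.eval (x : ℝ))^2 := by
  have hdesc0 : (((2*d).descFactorial d : ℕ) : ℝ) ≠ 0 := by
    have h0 : (2*d).descFactorial d ≠ 0 := by
      rw [Ne, Nat.descFactorial_eq_zero_iff_lt]
      omega
    exact Nat.cast_ne_zero.mpr h0
  set c : ℝ := (((2*d).descFactorial d : ℕ) : ℝ)⁻¹ with hc
  set r : Polynomial ℝ := G - C c * pp M d with hrdef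
  have hre : ∀ x : ℝ, G.eval x = c * (pp M d).eval x + r.eval x := by
    intro x
    rw [hrdef]
    simp only [Polynomial.eval_sub, Polynomial.eval_mul, Polynomial.eval_C]
    ring
  have hr1 : r.natDegree ≤ d := by
    refine le_trans (Polynomial.natDegree_sub_le _ _) (max_le (le_of_eq hdeg) ?_)
    exact le_trans (Polynomial.natDegree_C_mul_le _ _) (pp_natDegree M d)
  have hr2 : r.coeff d = 0 := by
    rw [hrdef]
    rw [Polynomial.coeff_sub, Polynomial.coeff_C_mul, pp_coeff]
    have : G.coeff d = 1 := by
      have := hmonic.coeff_natDegree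
      rwa [hdeg] at this
    rw [this, hc, inv_mul_cancel₀ hdesc0, sub_self]
  have horth : ∑ x ∈ range M, (pp M d).eval (x:ℝ) * r.eval (x:ℝ) = 0 :=
    sum_pp_orth M d r (fwdP_iter_eq_zero' d r hr1 hr2)
  have hexp : ∑ x ∈ range M, (G.eval (x:ℝ))^2
      = c^2 * (∑ x ∈ range M, ((pp M d).eval (x:ℝ))^2)
        + 2*c*(∑ x ∈ range M, (pp M d).eval (x:ℝ) * r.eval (x:ℝ))
        + ∑ x ∈ range M, (r.eval (x:ℝ))^2 := by
    rw [Finset.mul_sum, Finset.mul_sum, ← Finset.sum_add_distrib, ← Finset.sum_add_distrib]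
    refine Finset.sum_congr rfl fun x _ => ?_
    rw [hre x]; ring
  have hnorm : ∑ x ∈ range M, ((pp M d).eval (x:ℝ))^2
      = ((2*d).factorial : ℝ) * ((d.factorial * d.factorial * ((M+d).choose (2*d+1)) : ℕ) : ℝ) := by
    rw [sum_pp_sq M d, ← conv_desc M d hMd]
    congr 1
    rw [Nat.cast_sum]
    refine Finset.sum_congr rfl fun x hx => ?_
    rw [Finset.mem_range] at hx
    rw [FF_eval_shift M d x hx]
    push_cast
    ring
  have hrsq : 0 ≤ ∑ x ∈ range M, (r.eval (x:ℝ))^2 :=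
    Finset.sum_nonneg fun x _ => sq_nonneg _
  have hle : c^2 * (∑ x ∈ range M, ((pp M d).eval (x:ℝ))^2) ≤ ∑ x ∈ range M, (G.eval (x:ℝ))^2 := by
    rw [hexp, horth]
    linarith
  refine le_trans (le_of_eq ?_) hle
  rw [hnorm, hc, descFact_cast]
  have hf1 : (0:ℝ) < (d.factorial : ℝ) := by positivity
  have hf2 : (0:ℝ) < ((2*d).factorial : ℝ) := by positivity
  push_cast
  field_simp

lemma prodid (M : ℕ) : ∀ d : ℕ,
    ∏ j ∈ range (2*d+1), ((M:ℝ) + d - j) = M * ∏ k ∈ range d, ((M:ℝ)^2 - ((k:ℝ)+1)^2)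
  | 0 => by simp
  | d+1 => by
    have h1 : 2*(d+1)+1 = (2*d+2)+1 := by omega
    rw [h1, Finset.prod_range_succ, Finset.prod_range_succ']
    have h2 : ∏ k ∈ range (2*d+1), ((M:ℝ) + ((d+1:ℕ):ℝ) - ((k+1:ℕ):ℝ))
        = ∏ j ∈ range (2*d+1), ((M:ℝ) + (d:ℝ) - (j:ℝ)) :=
      Finset.prod_congr rfl fun j _ => by push_cast; ring
    rw [h2, prodid M d, Finset.prod_range_succ]
    push_cast
    ring

lemma choose_cast (M d : ℕ) (hMd : d + 1 ≤ M) :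
    (((M+d).choose (2*d+1) : ℕ) : ℝ) * (((2*d+1).factorial : ℕ) : ℝ)
      = (M:ℝ) * ∏ k ∈ range d, ((M:ℝ)^2 - ((k:ℝ)+1)^2) := by
  have h := Nat.descFactorial_eq_factorial_mul_choose (M+d) (2*d+1)
  have h2 := congrArg (fun n : ℕ => (n : ℝ)) h
  rw [cast_descFactorial (M+d) (2*d+1)] at h2
  have h3 : ∏ j ∈ range (2*d+1), (((M+d:ℕ):ℝ) - (j:ℝ)) = M * ∏ k ∈ range d, ((M:ℝ)^2 - ((k:ℝ)+1)^2) := by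
    rw [← prodid M d]
    refine Finset.prod_congr rfl fun j _ => ?_
    push_cast
    ring
  rw [h3] at h2
  push_cast at h2
  linarith [h2]

lemma cb_bound : ∀ d : ℕ, (Nat.centralBinom d)^2 * (2*d+1) ≤ 16^d
  | 0 => by simp [Nat.centralBinom]
  | d+1 => by
    have key := Nat.succ_mul_centralBinom_succ d
    have ih := cb_bound d
    have hpos : 0 < (d+1)^2 := by positivity
    apply Nat.le_of_mul_le_mul_left _ hpos
    calc (d+1)^2 * ((Nat.centralBinom (d+1))^2 * (2*(d+1)+1))
        = ((d+1) * Nat.centralBinom (d+1))^2 * (2*d+3) := by ring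
      _ = (2*(2*d+1)*Nat.centralBinom d)^2 * (2*d+3) := by rw [key]
      _ = (4*(2*d+1)*(2*d+3)) * ((Nat.centralBinom d)^2*(2*d+1)) := by ring
      _ ≤ (4*(2*d+1)*(2*d+3)) * 16^d := Nat.mul_le_mul_left _ ih
      _ ≤ (16*(d+1)^2) * 16^d := Nat.mul_le_mul_right _ (by nlinarith)
      _ = (d+1)^2 * 16^(d+1) := by ring

lemma exp_le_one_sub (x : ℝ) (h0 : 0 ≤ x) (h1 : x ≤ 1/2) : Real.exp (-(2*x)) ≤ 1 - x := by
  have ha : (1:ℝ) + 2*x ≤ Real.exp (2*x) := by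
    have := Real.add_one_le_exp (2*x)
    linarith
  have hb : (0:ℝ) < 1 + 2*x := by linarith
  have hc : (0:ℝ) < Real.exp (2*x) := Real.exp_pos _
  rw [Real.exp_neg]
  have hd : (Real.exp (2*x))⁻¹ ≤ (1 + 2*x)⁻¹ := by
    apply inv_anti₀ hb ha
  refine le_trans hd ?_
  rw [inv_eq_one_div, div_le_iff₀ hb]
  nlinarith

lemma sum_sq_le (d : ℕ) : ∑ k ∈ range d, (((k:ℝ)+1)^2) ≤ (d:ℝ)^3 := by
  have h1 : ∀ k ∈ range d, ((k:ℝ)+1)^2 ≤ (d:ℝ)^2 := by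
    intro k hk
    rw [Finset.mem_range] at hk
    have : (k:ℝ)+1 ≤ (d:ℝ) := by exact_mod_cast Nat.succ_le_of_lt hk
    nlinarith [show (0:ℝ) ≤ (k:ℝ) from Nat.cast_nonneg k]
  calc ∑ k ∈ range d, (((k:ℝ)+1)^2) ≤ ∑ k ∈ range d, (d:ℝ)^2 := Finset.sum_le_sum h1
    _ = (d:ℝ) * (d:ℝ)^2 := by rw [Finset.sum_const, Finset.card_range, nsmul_eq_mul]
    _ = (d:ℝ)^3 := by ring
lemma prod_lb (M d : ℕ) (hM : 0 < M) (hd : 2*d ≤ M) :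
    (M:ℝ)^(2*d) * Real.exp (-(2*(d:ℝ)^3)/(M:ℝ)^2)
      ≤ ∏ k ∈ range d, ((M:ℝ)^2 - ((k:ℝ)+1)^2) := by
  have hMr : (0:ℝ) < M := by exact_mod_cast hM
  have step1 : ∀ k ∈ range d,
      (M:ℝ)^2 * Real.exp (-(2*(((k:ℝ)+1)^2/(M:ℝ)^2))) ≤ (M:ℝ)^2 - ((k:ℝ)+1)^2 := by
    intro k hk
    rw [Finset.mem_range] at hk
    have hk1 : ((k:ℝ)+1) ≤ (d:ℝ) := by
      have : (k:ℝ) + 1 ≤ (d:ℝ) := by exact_mod_cast Nat.succ_le_of_lt hk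
      exact this
    have hd2 : (2:ℝ)*(d:ℝ) ≤ (M:ℝ) := by exact_mod_cast hd
    have hx0 : 0 ≤ ((k:ℝ)+1)^2/(M:ℝ)^2 := by positivity
    have hx1 : ((k:ℝ)+1)^2/(M:ℝ)^2 ≤ 1/2 := by
      rw [div_le_iff₀ (by positivity)]
      nlinarith [sq_nonneg ((k:ℝ)+1), sq_nonneg (d:ℝ)]
    have := exp_le_one_sub _ hx0 hx1
    have hexpand : (M:ℝ)^2 * (1 - ((k:ℝ)+1)^2/(M:ℝ)^2) = (M:ℝ)^2 - ((k:ℝ)+1)^2 := by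
      field_simp
    calc (M:ℝ)^2 * Real.exp (-(2*(((k:ℝ)+1)^2/(M:ℝ)^2)))
        ≤ (M:ℝ)^2 * (1 - ((k:ℝ)+1)^2/(M:ℝ)^2) := by
          apply mul_le_mul_of_nonneg_left this (by positivity)
      _ = _ := hexpand
  have step2 : ∏ k ∈ range d, ((M:ℝ)^2 * Real.exp (-(2*(((k:ℝ)+1)^2/(M:ℝ)^2))))
      ≤ ∏ k ∈ range d, ((M:ℝ)^2 - ((k:ℝ)+1)^2) := by
    apply Finset.prod_le_prod (fun k _ => by positivity) step1
  refine le_trans ?_ step2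
  rw [Finset.prod_mul_distrib, Finset.prod_const, Finset.card_range, ← Real.exp_sum]
  have hM2 : ((M:ℝ)^2)^d = (M:ℝ)^(2*d) := by rw [← pow_mul, mul_comm]
  rw [hM2]
  apply mul_le_mul_of_nonneg_left _ (by positivity)
  apply Real.exp_le_exp.mpr
  have hsum : ∑ k ∈ range d, (-(2*(((k:ℝ)+1)^2/(M:ℝ)^2)))
      = (-2/(M:ℝ)^2) * ∑ k ∈ range d, (((k:ℝ)+1)^2) := by
    rw [Finset.mul_sum]
    refine Finset.sum_congr rfl fun k _ => ?_
    field_simp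
  rw [hsum, show -(2*(d:ℝ)^3)/(M:ℝ)^2 = (-2/(M:ℝ)^2) * (d:ℝ)^3 by ring]
  have hnn : (0:ℝ) ≤ 2/(M:ℝ)^2 := by positivity
  have hneg : (-2:ℝ)/(M:ℝ)^2 ≤ 0 := by rw [neg_div]; linarith
  exact mul_le_mul_of_nonpos_left (sum_sq_le d) hneg


lemma numeric (M d : ℕ) (hM : 0 < M) (hd : 2*d ≤ M) :
    (M:ℝ) * ((M:ℝ)^d / (4:ℝ)^((d:ℝ)+1/2) * Real.exp (-(d:ℝ)^3/(M:ℝ)^2))^2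
      ≤ ((d.factorial:ℝ))^4 * (((M+d).choose (2*d+1):ℕ):ℝ) / ((2*d).factorial:ℝ) := by
  have hMd : d + 1 ≤ M := by omega
  have hMr : (0:ℝ) < M := by exact_mod_cast hM
  set K : ℝ := (((2*d).choose d : ℕ) : ℝ) with hK
  set F1 : ℝ := (d.factorial : ℝ) with hF1
  set F2 : ℝ := ((2*d).factorial : ℝ) with hF2
  set F3 : ℝ := ((2*d+1).factorial : ℝ) with hF3
  set P : ℝ := ∏ k ∈ range d, ((M:ℝ)^2 - ((k:ℝ)+1)^2) with hP
  set A : ℝ := (M:ℝ)^(2*d) * Real.exp (-(2*(d:ℝ)^3)/(M:ℝ)^2) with hA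
  set Ch : ℝ := (((M+d).choose (2*d+1):ℕ):ℝ) with hCh
  have hK0 : 0 < K := by
    rw [hK]
    exact_mod_cast Nat.choose_pos (show d ≤ 2*d by omega)
  have hA0 : 0 < A := by rw [hA]; positivity
  have f1 : F2 = K * F1^2 := by
    have h := Nat.choose_mul_factorial_mul_factorial (show d ≤ 2*d by omega)
    rw [show 2*d - d = d by omega] at h
    have h2 := congrArg (fun n : ℕ => (n : ℝ)) h
    push_cast at h2
    rw [hK, hF1, hF2]
    push_cast
    nlinarith [h2]
  have f2 : F3 = (2*(d:ℝ)+1) * F2 := by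
    rw [hF3, hF2, show 2*d+1 = (2*d)+1 from rfl, Nat.factorial_succ]
    push_cast
    ring
  have f3 : Ch * F3 = (M:ℝ) * P := choose_cast M d hMd
  have f4 : K^2*(2*(d:ℝ)+1) ≤ (16:ℝ)^d := by
    have h := cb_bound d
    have h2 : ((2*d).choose d)^2 * (2*d+1) ≤ 16^d := by
      have : Nat.centralBinom d = (2*d).choose d := rfl
      rwa [this] at h
    rw [hK]
    exact_mod_cast h2
  have f5 : A ≤ P := prod_lb M d hM hd
  have hP0 : 0 ≤ P := le_trans (le_of_lt hA0) f5
  have h4sq : ((4:ℝ)^((d:ℝ)+1/2))^2 = (4:ℝ)^(2*d+1) := by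
    have e1 : ((4:ℝ)^((d:ℝ)+1/2))^(2:ℕ) = ((4:ℝ)^((d:ℝ)+1/2))^((2:ℕ):ℝ) :=
      (Real.rpow_natCast _ 2).symm
    rw [e1, ← Real.rpow_mul (by norm_num : (0:ℝ) ≤ 4),
      show ((d:ℝ)+1/2)*((2:ℕ):ℝ) = ((2*d+1:ℕ):ℝ) by push_cast; ring, Real.rpow_natCast]
  have hexp2 : (Real.exp (-(d:ℝ)^3/(M:ℝ)^2))^2 = Real.exp (-(2*(d:ℝ)^3)/(M:ℝ)^2) := by
    rw [sq, ← Real.exp_add]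
    congr 1
    ring
  have h40 : (0:ℝ) < (4:ℝ)^((d:ℝ)+1/2) := Real.rpow_pos_of_pos (by norm_num) _
  have f7 : (M:ℝ) * ((M:ℝ)^d / (4:ℝ)^((d:ℝ)+1/2) * Real.exp (-(d:ℝ)^3/(M:ℝ)^2))^2
      = (M:ℝ) * A / (4:ℝ)^(2*d+1) := by
    rw [mul_pow, div_pow, h4sq, hexp2, hA, ← pow_mul, show d*2 = 2*d by ring]
    ring
  rw [f7]
  have hF20 : (0:ℝ) < F2 := by rw [hF2]; positivity
  rw [div_le_div_iff₀ (by positivity) hF20]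
  -- goal : M * A * F2 ≤ F1^4 * Ch * 4^(2d+1)
  have hc0 : (0:ℝ) < (2*(d:ℝ)+1) * K := by positivity
  apply le_of_mul_le_mul_right _ hc0
  have f3' : Ch * ((2*(d:ℝ)+1) * (K * F1^2)) = (M:ℝ) * P := by
    rw [← f1, ← f2]
    exact f3
  have key : A * (K^2*(2*(d:ℝ)+1)) ≤ P * (4:ℝ)^(2*d+1) := by
    calc A * (K^2*(2*(d:ℝ)+1)) ≤ A * (16:ℝ)^d :=
          mul_le_mul_of_nonneg_left f4 (le_of_lt hA0)
      _ ≤ P * (16:ℝ)^d := mul_le_mul_of_nonneg_right f5 (by positivity)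
      _ ≤ P * (4:ℝ)^(2*d+1) := by
          have h16 : (16:ℝ)^d ≤ (4:ℝ)^(2*d+1) := by
            rw [show (16:ℝ) = 4^2 by norm_num, ← pow_mul]
            exact pow_le_pow_right₀ (by norm_num) (by omega)
          exact mul_le_mul_of_nonneg_left h16 hP0
  calc (M:ℝ) * A * F2 * ((2*(d:ℝ)+1) * K)
      = ((M:ℝ) * F1^2) * (A * (K^2*(2*(d:ℝ)+1))) := by rw [f1]; ring
    _ ≤ ((M:ℝ) * F1^2) * (P * (4:ℝ)^(2*d+1)) := by
        apply mul_le_mul_of_nonneg_left key (by positivity)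
    _ = (F1^2 * (4:ℝ)^(2*d+1)) * (Ch * ((2*(d:ℝ)+1) * (K * F1^2))) := by rw [f3']; ring
    _ = F1^4 * Ch * (4:ℝ)^(2*d+1) * ((2*(d:ℝ)+1)*K) := by ring

theorem stmt4 (M : ℕ) (hM : 0 < M) (G : Polynomial ℝ) (d : ℕ)
    (hmonic : G.Monic) (hdeg : G.natDegree = d) (hd : 2 * d ≤ M) :
    ∃ i ∈ Finset.range M,
      (M : ℝ) ^ d / (4 : ℝ) ^ ((d : ℝ) + 1 / 2) * Real.exp (-(d : ℝ) ^ 3 / (M : ℝ) ^ 2) ≤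
        |G.eval (i : ℝ)| := by
  by_contra hcon
  push_neg at hcon
  set R : ℝ := (M:ℝ)^d / (4:ℝ)^((d:ℝ)+1/2) * Real.exp (-(d:ℝ)^3/(M:ℝ)^2) with hR
  have hMr : (0:ℝ) < M := by exact_mod_cast hM
  have hRpos : 0 < R := by
    rw [hR]
    have := Real.rpow_pos_of_pos (show (0:ℝ) < 4 by norm_num) ((d:ℝ)+1/2)
    positivity
  have hMd : d + 1 ≤ M := by omega
  have hcor := cor55 M d hMd G hmonic hdeg
  have hnum := numeric M d hM hd
  have hup : ∑ x ∈ range M, (G.eval (x:ℝ))^2 < (M:ℝ) * R^2 := by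
    have hterm : ∀ x ∈ range M, (G.eval (x:ℝ))^2 < R^2 := by
      intro x hx
      have h1 := hcon x hx
      have h2 := sq_abs (G.eval (x:ℝ))
      nlinarith [abs_nonneg (G.eval (x:ℝ))]
    calc ∑ x ∈ range M, (G.eval (x:ℝ))^2 < ∑ _x ∈ range M, R^2 :=
        Finset.sum_lt_sum_of_nonempty (by rw [Finset.nonempty_range_iff]; omega) hterm
      _ = (M:ℝ) * R^2 := by rw [Finset.sum_const, Finset.card_range, nsmul_eq_mul]
  rw [hR] at hup
  linarith
end

section
/- Let M be a positive integer and let G be a monic real polynomial of degree d with 1 ≤ d < M. Then ∑_{i=0}^{M-1} G(i)^2 ≥ binom(2d,d)^{-2} · M(M^2-1^2)(M^2-2^2)···(M^2-d^2)/(2d+1). -/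
open Finset Polynomial

noncomputable def dD (f : ℕ → ℝ) : ℕ → ℝ := fun x => f (x+1) - f x

lemma sum_parts (g q : ℕ → ℝ) (M : ℕ) :
    ∑ x ∈ range M, (g (x+1) - g x) * q x
      = g M * q M - g 0 * q 0 - ∑ x ∈ range M, g (x+1) * (q (x+1) - q x) := by
  induction M with
  | zero => simp
  | succ M ih =>
    rw [Finset.sum_range_succ, Finset.sum_range_succ, ih]
    ring

lemma dD_vanish (f : ℕ → ℝ) (d a : ℕ) (h : ∀ i < d, f (a + i) = 0) :
    ∀ j k, j + k < d → (dD^[j] f) (a + k) = 0 := by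
  intro j
  induction j with
  | zero => intro k hk; simpa using h k (by omega)
  | succ j ih =>
    intro k hk
    rw [Function.iterate_succ_apply']
    show dD^[j] f (a + k + 1) - dD^[j] f (a + k) = 0
    have h1 : dD^[j] f (a + (k+1)) = 0 := ih (k+1) (by omega)
    have h2 : dD^[j] f (a + k) = 0 := ih k (by omega)
    rw [show a + k + 1 = a + (k+1) by omega, h1, h2, sub_zero]

lemma iter_parts (f : ℕ → ℝ) (d M : ℕ)
    (h0 : ∀ i < d, f i = 0) (hM : ∀ i < d, f (M + i) = 0) :
    ∀ k, k ≤ d → ∀ q : ℕ → ℝ,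
      ∑ x ∈ range M, (dD^[d] f) x * q x
        = (-1:ℝ)^k * ∑ x ∈ range M, (dD^[d-k] f) (x+k) * (dD^[k] q) x := by
  intro k
  induction k with
  | zero => intro _ q; simp
  | succ k ih =>
    intro hk q
    rw [ih (by omega) q]
    have hdk : d - k = (d - (k+1)) + 1 := by omega
    set g : ℕ → ℝ := fun x => dD^[d-(k+1)] f (x + k) with hg
    have hdg : ∀ x, (dD^[d-k] f) (x+k) = g (x+1) - g x := by
      intro x
      rw [hdk, Function.iterate_succ_apply']
      show dD^[d-(k+1)] f (x+k+1) - dD^[d-(k+1)] f (x+k) = g (x+1) - g x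
      simp only [hg]
      ring_nf
    have hgM : g M = 0 := by
      have := dD_vanish f d M hM (d-(k+1)) k (by omega)
      simpa [hg] using this
    have hg0 : g 0 = 0 := by
      have := dD_vanish f d 0 (by simpa using h0) (d-(k+1)) k (by omega)
      simpa [hg] using this
    calc (-1:ℝ)^k * ∑ x ∈ range M, (dD^[d-k] f) (x+k) * (dD^[k] q) x
        = (-1:ℝ)^k * ∑ x ∈ range M, (g (x+1) - g x) * (dD^[k] q) x := by
          congr 1; exact Finset.sum_congr rfl fun x _ => by rw [hdg]
      _ = (-1:ℝ)^k * (g M * (dD^[k] q) M - g 0 * (dD^[k] q) 0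
            - ∑ x ∈ range M, g (x+1) * ((dD^[k] q) (x+1) - (dD^[k] q) x)) := by
          rw [sum_parts]
      _ = (-1:ℝ)^(k+1) * ∑ x ∈ range M, (dD^[d-(k+1)] f) (x+(k+1)) * (dD^[k+1] q) x := by
          rw [hgM, hg0]
          have hterm : ∀ x ∈ range M, ((-1:ℝ)^(k+1)) * ((dD^[d-(k+1)] f) (x+(k+1)) * (dD^[k+1] q) x)
              = (-1:ℝ)^k * (-(g (x+1) * ((dD^[k] q) (x+1) - (dD^[k] q) x))) := by
            intro x _
            have h1 : g (x+1) = dD^[d-(k+1)] f (x+(k+1)) := by simp only [hg]; ring_nf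
            have h2 : dD^[k+1] q x = dD^[k] q (x+1) - dD^[k] q x := by
              rw [Function.iterate_succ_apply']; rfl
            rw [h1, h2]; ring
          rw [Finset.mul_sum, Finset.sum_congr rfl hterm, ← Finset.mul_sum]
          rw [Finset.sum_neg_distrib]
          ring


noncomputable def pD (p : Polynomial ℝ) : Polynomial ℝ := p.comp (X + 1) - p

lemma coeff_comp_X_add_one_s5 (p : Polynomial ℝ) (n : ℕ) :
    (p.comp (X + 1)).coeff n = ∑ i ∈ range (p.natDegree + 1), p.coeff i * (i.choose n) := by
  rw [Polynomial.comp, Polynomial.eval₂_eq_sum_range, Polynomial.finset_sum_coeff]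
  apply Finset.sum_congr rfl
  intro i _
  rw [Polynomial.coeff_C_mul]
  rw [show ((X : Polynomial ℝ) + 1) = (1 + X) by ring, ← Polynomial.coeff_X_add_one_pow ℝ i n]
  congr 2
  ring

lemma pD_coeff_zero (p : Polynomial ℝ) (m n : ℕ) (hp : p.natDegree ≤ m) (hn : m ≤ n) :
    (pD p).coeff n = 0 := by
  rw [pD, Polynomial.coeff_sub, coeff_comp_X_add_one_s5]
  rcases le_or_gt n p.natDegree with h | h
  · rw [Finset.sum_eq_single n]
    · simp
    · intro i hi hne
      rcases lt_or_gt_of_ne hne with h' | h'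
      · rw [Nat.choose_eq_zero_of_lt h', Nat.cast_zero, mul_zero]
      · exfalso; exact absurd (Finset.mem_range.mp hi) (by omega)
    · intro h'; exact absurd (Finset.mem_range.mpr (by omega)) h'
  · rw [Polynomial.coeff_eq_zero_of_natDegree_lt h, sub_zero]
    apply Finset.sum_eq_zero
    intro i hi
    have : i < n := by have := Finset.mem_range.mp hi; omega
    rw [Nat.choose_eq_zero_of_lt this, Nat.cast_zero, mul_zero]

lemma pD_natDegree_le (p : Polynomial ℝ) (m : ℕ) (hp : p.natDegree ≤ m) :
    (pD p).natDegree ≤ m - 1 := by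
  rw [Polynomial.natDegree_le_iff_coeff_eq_zero]
  intro n hn
  exact pD_coeff_zero p m n hp (by omega)

lemma pD_coeff_top (p : Polynomial ℝ) (m : ℕ) (hm : 1 ≤ m) (hp : p.natDegree ≤ m) :
    (pD p).coeff (m - 1) = m * p.coeff m := by
  rw [pD, Polynomial.coeff_sub, coeff_comp_X_add_one_s5]
  have hext : ∑ i ∈ range (p.natDegree + 1), p.coeff i * (i.choose (m-1))
      = ∑ i ∈ range (m + 1), p.coeff i * (i.choose (m-1)) := by
    apply Finset.sum_subset
    · intro x hx
      simp only [Finset.mem_range] at *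
      omega
    · intro x hx hx'
      simp only [Finset.mem_range] at *
      rw [Polynomial.coeff_eq_zero_of_natDegree_lt (by omega), zero_mul]
  rw [hext]
  have hm1 : m + 1 = (m - 1) + 1 + 1 := by omega
  rw [hm1, Finset.sum_range_succ, Finset.sum_range_succ]
  have hz : ∑ i ∈ range (m-1), p.coeff i * (i.choose (m-1)) = 0 := by
    apply Finset.sum_eq_zero
    intro i hi
    rw [Nat.choose_eq_zero_of_lt (Finset.mem_range.mp hi), Nat.cast_zero, mul_zero]
  rw [hz, zero_add, Nat.choose_self]
  have h1 : m - 1 + 1 = m := by omega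
  rw [h1]
  have h2 : (m.choose (m-1)) = m := by
    rw [Nat.choose_symm (by omega)]
    simp [show m - (m-1) = 1 by omega]
  rw [h2]
  ring

lemma pD_iter (k : ℕ) : ∀ (p : Polynomial ℝ) (m : ℕ), k ≤ m → p.natDegree ≤ m →
    (pD^[k] p).natDegree ≤ m - k ∧ (pD^[k] p).coeff (m - k) = (m.descFactorial k) * p.coeff m := by
  induction k with
  | zero => intro p m _ hp; simpa using hp
  | succ k ih =>
    intro p m hk hp
    rw [Function.iterate_succ_apply]
    have h1 : (pD p).natDegree ≤ m - 1 := pD_natDegree_le p m hp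
    obtain ⟨hd, hc⟩ := ih (pD p) (m-1) (by omega) h1
    constructor
    · calc (pD^[k] (pD p)).natDegree ≤ (m-1) - k := hd
        _ ≤ m - (k+1) := by omega
    · rw [show m - (k+1) = (m-1) - k by omega, hc,
        pD_coeff_top p m (by omega) hp]
      rw [show m = (m-1)+1 by omega, Nat.succ_descFactorial_succ]
      push_cast
      rw [show (m-1)+1 = m by omega]
      ring

lemma dD_eval (p : Polynomial ℝ) (k : ℕ) :
    ∀ x : ℕ, (dD^[k] (fun n : ℕ => p.eval (n:ℝ))) x = (pD^[k] p).eval (x:ℝ) := by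
  induction k generalizing p with
  | zero => intro x; simp
  | succ k ih =>
    intro x
    rw [Function.iterate_succ_apply, Function.iterate_succ_apply]
    have : dD (fun n : ℕ => p.eval (n:ℝ)) = fun n : ℕ => (pD p).eval (n:ℝ) := by
      funext n
      simp only [dD, pD, Polynomial.eval_sub, Polynomial.eval_comp, Polynomial.eval_add,
        Polynomial.eval_X, Polynomial.eval_one]
      push_cast
      ring
    rw [this, ih]

lemma chooseA : ∀ p q n : ℕ,
    ∑ k ∈ range (n+1), (k+p).choose p * (n-k+q).choose q = (n+p+q+1).choose (p+q+1) := by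
  intro p
  induction p with
  | zero =>
    intro q n
    have h := Finset.sum_range_reflect (fun k => (k+q).choose q) (n+1)
    simp only [Nat.add_sub_cancel] at h
    calc ∑ k ∈ range (n+1), (k+0).choose 0 * (n-k+q).choose q
        = ∑ k ∈ range (n+1), (n+1-1-k+q).choose q := by
          apply Finset.sum_congr rfl
          intro k hk
          have hk' := Finset.mem_range.mp hk
          rw [Nat.choose_zero_right, one_mul, show n+1-1-k = n-k by omega]
      _ = ∑ k ∈ range (n+1), (k+q).choose q := h
      _ = (n+q+1).choose (q+1) := Nat.sum_range_add_choose n q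
      _ = (n+0+q+1).choose (0+q+1) := by norm_num
  | succ p ih =>
    intro q n
    have step : ∑ k ∈ range (n+1), (k+(p+1)).choose (p+1) * (n-k+q).choose q
        = ∑ j ∈ range (n+1), (j+p).choose p * (n-j+(q+1)).choose (q+1) := by
      calc ∑ k ∈ range (n+1), (k+(p+1)).choose (p+1) * (n-k+q).choose q
          = ∑ k ∈ range (n+1), ∑ j ∈ range (k+1), (j+p).choose p * (n-k+q).choose q := by
            apply Finset.sum_congr rfl
            intro k _
            rw [show k+(p+1) = k+p+1 by omega, ← Nat.sum_range_add_choose k p, Finset.sum_mul]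
        _ = ∑ j ∈ range (n+1), ∑ k ∈ Finset.Ico j (n+1), (j+p).choose p * (n-k+q).choose q := by
            simp only [Finset.range_eq_Ico]
            rw [← Finset.sum_Ico_Ico_comm]
        _ = ∑ j ∈ range (n+1), (j+p).choose p * (n-j+(q+1)).choose (q+1) := by
            apply Finset.sum_congr rfl
            intro j hj
            have hj' := Finset.mem_range.mp hj
            rw [← Finset.mul_sum]
            congr 1
            rw [Finset.sum_Ico_eq_sum_range]
            have h2 : ∀ i ∈ range (n+1-j), (n-(j+i)+q).choose q = ((n-j)-i+q).choose q := by
              intro i hi; congr 2; omega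
            rw [Finset.sum_congr rfl h2]
            have h3 := Finset.sum_range_reflect (fun i => ((n-j)-i+q).choose q) (n+1-j)
            have h4 : ∀ i ∈ range (n+1-j), ((n-j)-(n+1-j-1-i)+q).choose q = (i+q).choose q := by
              intro i hi
              have hi' := Finset.mem_range.mp hi
              congr 2
              omega
            rw [show n+1-j = (n-j)+1 by omega] at h3 ⊢
            rw [← h3, Finset.sum_congr rfl (by
              intro i hi
              have hi' := Finset.mem_range.mp hi
              show ((n-j)-((n-j)+1-1-i)+q).choose q = (i+q).choose q
              congr 2
              omega)]
            rw [Nat.sum_range_add_choose (n-j) q]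
            congr 1 <;> omega
    rw [step, ih (q+1) n]
    congr 1 <;> omega

lemma identityI (M d : ℕ) (hdM : d < M) :
    ∑ x ∈ range M, (x+d).descFactorial d * (M-1-x).descFactorial d
      = (d.factorial)^2 * (M+d).choose (2*d+1) := by
  have h1 : ∑ x ∈ range M, (x+d).descFactorial d * (M-1-x).descFactorial d
      = (d.factorial)^2 * ∑ x ∈ range M, (x+d).choose d * (M-1-x).choose d := by
    rw [Finset.mul_sum]
    apply Finset.sum_congr rfl
    intro x _
    rw [Nat.descFactorial_eq_factorial_mul_choose, Nat.descFactorial_eq_factorial_mul_choose]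
    ring
  rw [h1]
  congr 1
  have h2 : ∑ x ∈ range M, (x+d).choose d * (M-1-x).choose d
      = ∑ x ∈ range (M-d), (x+d).choose d * (M-1-x).choose d := by
    symm
    apply Finset.sum_subset
    · intro x hx
      simp only [Finset.mem_range] at *
      omega
    · intro x hx hx'
      simp only [Finset.mem_range] at *
      rw [Nat.choose_eq_zero_of_lt (show M-1-x < d by omega), mul_zero]
  rw [h2]
  have h3 : ∀ x ∈ range (M-d), (x+d).choose d * (M-1-x).choose d
      = (x+d).choose d * ((M-1-d)-x+d).choose d := by
    intro x hx
    have := Finset.mem_range.mp hx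
    congr 2
    omega
  rw [Finset.sum_congr rfl h3, show M - d = (M-1-d)+1 by omega, chooseA d d (M-1-d)]
  congr 1 <;> omega

lemma identityII : ∀ d M : ℕ, d < M →
    M * ∏ i ∈ Finset.Icc 1 d, (M-i)*(M+i) = (M+d).descFactorial (2*d+1) := by
  intro d
  induction d with
  | zero => intro M _; simp
  | succ d ih =>
    intro M hM
    have key : (M+(d+1)).descFactorial (2*(d+1)+1)
        = (M+d+1) * ((M-(d+1)) * (M+d).descFactorial (2*d+1)) := by
      rw [show M+(d+1) = (M+d)+1 by omega, show 2*(d+1)+1 = (2*d+2)+1 by omega,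
        Nat.succ_descFactorial_succ, show 2*d+2 = (2*d+1)+1 by omega, Nat.descFactorial_succ,
        show M+d-(2*d+1) = M-(d+1) by omega]
    rw [Finset.prod_Icc_succ_top (by omega), key, ← ih M (by omega)]
    ring
lemma cast_descProd (m d : ℕ) : ∏ i ∈ range d, ((m:ℝ) - (i:ℝ)) = (m.descFactorial d : ℝ) := by
  rcases le_or_gt d m with h | h
  · rw [Nat.descFactorial_eq_prod_range, Nat.cast_prod]
    apply Finset.prod_congr rfl
    intro i hi
    have hi' := Finset.mem_range.mp hi
    rw [Nat.cast_sub (by omega)]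
  · rw [Nat.descFactorial_eq_zero_iff_lt.mpr h, Nat.cast_zero]
    apply Finset.prod_eq_zero (Finset.mem_range.mpr h)
    simp

theorem stmt5 (M : ℕ) (hM : 0 < M) (G : Polynomial ℝ) (d : ℕ)
    (hmonic : G.Monic) (hdeg : G.natDegree = d) (hd1 : 1 ≤ d) (hdM : d < M) :
    ((Nat.choose (2 * d) d : ℝ))⁻¹ ^ 2 *
        ((M : ℝ) * ∏ i ∈ Finset.Icc 1 d, ((M : ℝ) ^ 2 - (i : ℝ) ^ 2)) / (2 * (d : ℝ) + 1) ≤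
      ∑ i ∈ Finset.range M, (G.eval (i : ℝ)) ^ 2 := by
  classical
  set f1 : Polynomial ℝ := ∏ i ∈ range d, (X - C (i:ℝ)) with hf1
  set f2 : Polynomial ℝ := ∏ i ∈ range d, (X - C ((M+i : ℕ):ℝ)) with hf2
  set fp : Polynomial ℝ := f1 * f2 with hfp
  have hm1 : f1.Monic := monic_prod_of_monic _ _ fun i _ => monic_X_sub_C _
  have hm2 : f2.Monic := monic_prod_of_monic _ _ fun i _ => monic_X_sub_C _
  have hmf : fp.Monic := hm1.mul hm2
  have hdeg1 : f1.natDegree = d := by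
    rw [hf1, Polynomial.natDegree_prod_of_monic _ _ fun i _ => monic_X_sub_C _]
    simp only [Polynomial.natDegree_X_sub_C]
    simp
  have hdeg2 : f2.natDegree = d := by
    rw [hf2, Polynomial.natDegree_prod_of_monic _ _ fun i _ => monic_X_sub_C _]
    simp only [Polynomial.natDegree_X_sub_C]
    simp
  have hdegf : fp.natDegree = 2*d := by
    rw [hfp, hm1.natDegree_mul hm2, hdeg1, hdeg2]; ring
  have hcoef : fp.coeff (2*d) = 1 := by rw [← hdegf]; exact hmf.coeff_natDegree
  set fe : ℕ → ℝ := fun x => fp.eval (x:ℝ) with hfe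
  have hfe0 : ∀ i < d, fe i = 0 := by
    intro i hi
    show fp.eval (i:ℝ) = 0
    rw [hfp, Polynomial.eval_mul]
    apply mul_eq_zero_of_left
    rw [hf1, Polynomial.eval_prod]
    apply Finset.prod_eq_zero (Finset.mem_range.mpr hi)
    simp
  have hfeM : ∀ i < d, fe (M+i) = 0 := by
    intro i hi
    show fp.eval ((M+i : ℕ):ℝ) = 0
    rw [hfp, Polynomial.eval_mul]
    apply mul_eq_zero_of_right
    rw [hf2, Polynomial.eval_prod]
    apply Finset.prod_eq_zero (Finset.mem_range.mpr hi)
    simp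
  set tp : Polynomial ℝ := pD^[d] fp with htp
  obtain ⟨htd, htc⟩ := pD_iter d fp (2*d) (by omega) (le_of_eq hdegf)
  have htd' : tp.natDegree ≤ d := by rw [htp]; omega
  have htc' : tp.coeff d = ((2*d).descFactorial d : ℝ) := by
    have h2 : 2*d - d = d := by omega
    rw [h2] at htc
    rw [htp, htc, hcoef, mul_one]
  set K : ℕ := ∑ x ∈ range M, (x+d).descFactorial d * (M-1-x).descFactorial d with hK
  have hSf : ∑ x ∈ range M, fe (x+d) = (-1:ℝ)^d * (K:ℝ) := by
    rw [hK, Nat.cast_sum, Finset.mul_sum]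
    apply Finset.sum_congr rfl
    intro x hx
    have hxM := Finset.mem_range.mp hx
    show fp.eval ((x+d : ℕ):ℝ) = _
    rw [hfp, Polynomial.eval_mul, hf1, hf2, Polynomial.eval_prod, Polynomial.eval_prod]
    simp only [Polynomial.eval_sub, Polynomial.eval_X, Polynomial.eval_C]
    have h1 : ∏ i ∈ range d, (((x+d:ℕ):ℝ) - (i:ℝ)) = ((x+d).descFactorial d : ℝ) :=
      cast_descProd (x+d) d
    have h2 : ∏ i ∈ range d, (((x+d:ℕ):ℝ) - ((M+i:ℕ):ℝ))
        = (-1:ℝ)^d * ((M-1-x).descFactorial d : ℝ) := by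
      rw [← Finset.prod_range_reflect (fun i => (((x+d:ℕ):ℝ) - ((M+i:ℕ):ℝ))) d]
      have hstep : ∀ j ∈ range d, (((x+d:ℕ):ℝ) - ((M+(d-1-j):ℕ):ℝ))
          = (-1) * ((((M-1-x):ℕ):ℝ) - (j:ℝ)) := by
        intro j hj
        have hj' := Finset.mem_range.mp hj
        have e1 : ((M+(d-1-j):ℕ):ℝ) = (M:ℝ) + ((d:ℝ) - 1 - (j:ℝ)) := by
          rw [Nat.cast_add]
          congr 1
          rw [Nat.cast_sub (by omega), Nat.cast_sub (by omega), Nat.cast_one]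
        have e2 : (((M-1-x):ℕ):ℝ) = (M:ℝ) - 1 - (x:ℝ) := by
          rw [Nat.cast_sub (by omega), Nat.cast_sub (by omega), Nat.cast_one]
        rw [e1, e2]
        push_cast
        ring
      rw [Finset.prod_congr rfl hstep, Finset.prod_mul_distrib, Finset.prod_const,
        Finset.card_range, cast_descProd (M-1-x) d]
    rw [h1, h2]
    push_cast
    ring
  have key : ∀ q : Polynomial ℝ, q.natDegree ≤ d →
      ∑ x ∈ range M, tp.eval (x:ℝ) * q.eval (x:ℝ) = (d.factorial : ℝ) * q.coeff d * (K:ℝ) := by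
    intro q hq
    obtain ⟨hqd, hqc⟩ := pD_iter d q d le_rfl hq
    have hconst : ∀ x:ℕ, dD^[d] (fun n:ℕ => q.eval (n:ℝ)) x = (d.factorial : ℝ) * q.coeff d := by
      intro x
      rw [dD_eval]
      have hc : pD^[d] q = C ((pD^[d] q).coeff 0) :=
        Polynomial.eq_C_of_natDegree_le_zero (by omega)
      rw [hc, Polynomial.eval_C, show (0:ℕ) = d - d by omega, hqc, Nat.descFactorial_self]
    have hip := iter_parts fe d M hfe0 hfeM d le_rfl (fun n:ℕ => q.eval (n:ℝ))
    simp only [Nat.sub_self, Function.iterate_zero, id] at hip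
    calc ∑ x ∈ range M, tp.eval (x:ℝ) * q.eval (x:ℝ)
        = ∑ x ∈ range M, (dD^[d] fe) x * (fun n:ℕ => q.eval (n:ℝ)) x := by
          apply Finset.sum_congr rfl
          intro x _
          rw [dD_eval fp d x]
      _ = (-1:ℝ)^d * ∑ x ∈ range M, fe (x+d) * (dD^[d] (fun n:ℕ => q.eval (n:ℝ))) x := hip
      _ = (-1:ℝ)^d * ∑ x ∈ range M, fe (x+d) * ((d.factorial : ℝ) * q.coeff d) := by
          congr 1
          exact Finset.sum_congr rfl fun x _ => by rw [hconst]
      _ = (d.factorial : ℝ) * q.coeff d * (K:ℝ) := by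
          rw [← Finset.sum_mul, hSf]
          rcases Nat.even_or_odd d with he | ho
          · rw [he.neg_one_pow]; ring
          · rw [ho.neg_one_pow]; ring
  have hcoefG : G.coeff d = 1 := by rw [← hdeg]; exact hmonic.coeff_natDegree
  have hTG : ∑ x ∈ range M, tp.eval (x:ℝ) * G.eval (x:ℝ) = (d.factorial : ℝ) * (K:ℝ) := by
    rw [key G (le_of_eq hdeg), hcoefG, mul_one]
  have hTT : ∑ x ∈ range M, tp.eval (x:ℝ) * tp.eval (x:ℝ)
      = (d.factorial : ℝ) * ((2*d).descFactorial d : ℝ) * (K:ℝ) := by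
    rw [key tp htd', htc']
  -- Cauchy-Schwarz
  have hCS := Finset.sum_mul_sq_le_sq_mul_sq (range M)
    (fun x => tp.eval (x:ℝ)) (fun x => G.eval (x:ℝ))
  have hKval : K = (d.factorial)^2 * (M+d).choose (2*d+1) := identityI M d hdM
  have hCMpos : 0 < (M+d).choose (2*d+1) := Nat.choose_pos (by omega)
  have hKpos : (0:ℝ) < (K:ℝ) := by
    have : 0 < K := by
      rw [hKval]
      positivity
    exact_mod_cast this
  have hdfpos : (0:ℝ) < (d.factorial : ℝ) := by exact_mod_cast d.factorial_pos
  have hCc : ((2*d).descFactorial d : ℝ) = (d.factorial : ℝ) * ((2*d).choose d : ℝ) := by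
    exact_mod_cast congrArg (Nat.cast (R := ℝ)) (Nat.descFactorial_eq_factorial_mul_choose (2*d) d)
  have hCcpos : (0:ℝ) < (((2*d).choose d : ℕ) : ℝ) := by
    exact_mod_cast Nat.choose_pos (by omega)
  set SG : ℝ := ∑ i ∈ Finset.range M, (G.eval (i : ℝ)) ^ 2 with hSG
  have hSGineq : ((2*d).choose d : ℝ)⁻¹ * (K:ℝ) ≤ SG := by
    have h1 : ((d.factorial : ℝ) * (K:ℝ))^2
        ≤ ((d.factorial : ℝ) * ((d.factorial : ℝ) * ((2*d).choose d : ℝ)) * (K:ℝ)) * SG := by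
      calc ((d.factorial : ℝ) * (K:ℝ))^2
          = (∑ x ∈ range M, tp.eval (x:ℝ) * G.eval (x:ℝ))^2 := by rw [hTG]
        _ ≤ (∑ x ∈ range M, (tp.eval (x:ℝ))^2) * ∑ x ∈ range M, (G.eval (x:ℝ))^2 := hCS
        _ = ((d.factorial : ℝ) * ((d.factorial : ℝ) * ((2*d).choose d : ℝ)) * (K:ℝ)) * SG := by
            rw [hSG]
            congr 1
            rw [show (d.factorial : ℝ) * ((d.factorial : ℝ) * ((2*d).choose d : ℝ)) * (K:ℝ)
                = (d.factorial : ℝ) * (((2*d).descFactorial d : ℕ) : ℝ) * (K:ℝ) by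
                rw [hCc], ← hTT]
            apply Finset.sum_congr rfl
            intro x _
            ring
    have h2 : (K:ℝ) ≤ ((2*d).choose d : ℝ) * SG := by
      have hd2 : (0:ℝ) < (d.factorial:ℝ)^2 * (K:ℝ) := by positivity
      have h3 : ((d.factorial:ℝ)^2 * (K:ℝ)) * (K:ℝ)
          ≤ ((d.factorial:ℝ)^2 * (K:ℝ)) * (((2*d).choose d : ℝ) * SG) := by
        calc ((d.factorial:ℝ)^2 * (K:ℝ)) * (K:ℝ) = ((d.factorial:ℝ)*(K:ℝ))^2 := by ring
          _ ≤ ((d.factorial : ℝ) * ((d.factorial : ℝ) * ((2*d).choose d : ℝ)) * (K:ℝ)) * SG := h1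
          _ = ((d.factorial:ℝ)^2 * (K:ℝ)) * (((2*d).choose d : ℝ) * SG) := by ring
      exact le_of_mul_le_mul_left h3 hd2
    rw [inv_mul_le_iff₀ hCcpos]
    exact h2
  -- identify the target with K / Cc
  have hprod : (M : ℝ) * ∏ i ∈ Finset.Icc 1 d, ((M : ℝ) ^ 2 - (i : ℝ) ^ 2)
      = ((M * ∏ i ∈ Finset.Icc 1 d, (M-i)*(M+i) : ℕ) : ℝ) := by
    rw [Nat.cast_mul, Nat.cast_prod]
    congr 1
    apply Finset.prod_congr rfl
    intro i hi
    have hi' : i ≤ d := (Finset.mem_Icc.mp hi).2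
    rw [Nat.cast_mul, Nat.cast_sub (by omega), Nat.cast_add]
    ring
  have hnat : M * ∏ i ∈ Finset.Icc 1 d, (M-i)*(M+i)
      = (2*d+1).factorial * (M+d).choose (2*d+1) := by
    rw [identityII d M hdM, Nat.descFactorial_eq_factorial_mul_choose]
  have hfact2 : ((2*d).factorial : ℝ) = ((2*d).choose d : ℝ) * (d.factorial : ℝ) * (d.factorial : ℝ) := by
    have := Nat.choose_mul_factorial_mul_factorial (show d ≤ 2*d by omega)
    rw [show 2*d - d = d by omega] at this
    exact_mod_cast this.symm
  have htarget : ((Nat.choose (2 * d) d : ℝ))⁻¹ ^ 2 *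
        ((M : ℝ) * ∏ i ∈ Finset.Icc 1 d, ((M : ℝ) ^ 2 - (i : ℝ) ^ 2)) / (2 * (d : ℝ) + 1)
      = ((2*d).choose d : ℝ)⁻¹ * (K:ℝ) := by
    rw [hprod, hnat]
    have hKr : (K:ℝ) = ((d.factorial : ℝ))^2 * (((M+d).choose (2*d+1) : ℕ) : ℝ) := by
      exact_mod_cast congrArg (Nat.cast (R := ℝ)) hKval
    rw [hKr]
    have hfs : ((2*d+1).factorial : ℝ) = (2*(d:ℝ)+1) * ((2*d).factorial : ℝ) := by
      rw [show (2*d+1).factorial = (2*d+1) * (2*d).factorial from Nat.factorial_succ (2*d)]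
      push_cast
      ring
    push_cast [hfs, hfact2]
    have h2d1 : (2*(d:ℝ)+1) ≠ 0 := by positivity
    field_simp
  rw [htarget]
  exact hSGineq
end

section
/- For every integer d ≥ 1 and real M > 0 with d ≤ M/2 and d/M ≤ 1/4 (componentwise: i/M ≤ 1/4 for all i ≤ d), one has binom(2d,d)^{-2} · M(M^2-1^2)···(M^2-d^2)/(2d+1) ≥ (M/4)^{2d+1} · exp(-2d^3/M^2). -/
open Finset

lemma lemA : ∀ d : ℕ, (2*d+1) * (Nat.centralBinom d)^2 ≤ 16^d := by
  intro d
  induction d with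
  | zero => simp [Nat.centralBinom]
  | succ n ih =>
    have h := Nat.succ_mul_centralBinom_succ n
    have hp : 0 < (n+1)^2 := by positivity
    have key : (2*(n+1)+1) * Nat.centralBinom (n+1)^2 * (n+1)^2
        ≤ 16^(n+1) * (n+1)^2 := by
      have e : Nat.centralBinom (n+1)^2 * (n+1)^2 = (2*(2*n+1)*Nat.centralBinom n)^2 := by
        rw [← h]; ring
      calc (2*(n+1)+1) * Nat.centralBinom (n+1)^2 * (n+1)^2
          = (2*(n+1)+1) * ((2*(2*n+1)*Nat.centralBinom n)^2) := by rw [mul_assoc, e]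
        _ = (2*n+3)*4*(2*n+1) * ((2*n+1) * Nat.centralBinom n^2) := by ring
        _ ≤ (2*n+3)*4*(2*n+1) * 16^n := Nat.mul_le_mul_left _ ih
        _ ≤ 16^(n+1) * (n+1)^2 := by rw [pow_succ]; nlinarith
    exact Nat.le_of_mul_le_mul_right key hp

lemma lemB {x : ℝ} (h0 : 0 ≤ x) (h1 : x ≤ 1/2) : Real.exp (-(2*x)) ≤ 1 - x := by
  have h2 : 1 + 2*x ≤ Real.exp (2*x) := by
    have := Real.add_one_le_exp (2*x); linarith
  have h3 : Real.exp (-(2*x)) * Real.exp (2*x) = 1 := by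
    rw [← Real.exp_add]; simp
  nlinarith [Real.exp_pos (2*x), Real.exp_pos (-(2*x)),
    mul_le_mul_of_nonneg_left h2 (le_of_lt (Real.exp_pos (-(2*x))))]

theorem stmt6 (d : ℕ) (hd : 1 ≤ d) (M : ℝ) (hM : 0 < M) (hdM : (d : ℝ) ≤ M / 2)
    (hq : ∀ i : ℕ, i ≤ d → (i : ℝ) / M ≤ 1 / 4) :
    (M / 4) ^ (2 * d + 1) * Real.exp (-2 * (d : ℝ) ^ 3 / M ^ 2) ≤
      ((Nat.choose (2 * d) d : ℝ))⁻¹ ^ 2 *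
        (M * ∏ i ∈ Finset.Icc 1 d, (M ^ 2 - (i : ℝ) ^ 2)) / (2 * (d : ℝ) + 1) := by
  have hd1 : (1:ℝ) ≤ (d:ℝ) := by exact_mod_cast hd
  set C : ℝ := ((Nat.choose (2 * d) d : ℝ)) with hCdef
  have hC : 0 < C := by
    have : 0 < Nat.choose (2*d) d := Nat.choose_pos (by omega)
    rw [hCdef]; exact_mod_cast this
  set E : ℝ := Real.exp (-2 * (d : ℝ) ^ 3 / M ^ 2) with hEdef
  have hE : 0 < E := Real.exp_pos _
  -- factorwise bound
  have hfac : ∀ i ∈ Finset.Icc 1 d, M^2 * Real.exp (-(2*((i:ℝ)/M)^2)) ≤ M^2 - (i:ℝ)^2 := by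
    intro i hi
    have hi' : (i:ℝ)/M ≤ 1/4 := hq i (Finset.mem_Icc.mp hi).2
    have hx0 : 0 ≤ (i:ℝ)/M := div_nonneg (Nat.cast_nonneg i) hM.le
    have hx1 : ((i:ℝ)/M)^2 ≤ 1/2 := by nlinarith
    have hb := lemB (sq_nonneg ((i:ℝ)/M)) hx1
    have hM2 : M^2 - (i:ℝ)^2 = M^2 * (1 - ((i:ℝ)/M)^2) := by field_simp
    rw [hM2]
    exact mul_le_mul_of_nonneg_left hb (by positivity)
  have hprod : ∏ i ∈ Finset.Icc 1 d, (M^2 * Real.exp (-(2*((i:ℝ)/M)^2)))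
      ≤ ∏ i ∈ Finset.Icc 1 d, (M ^ 2 - (i : ℝ) ^ 2) :=
    Finset.prod_le_prod (fun i _ => by positivity) hfac
  have hcard : (Finset.Icc 1 d).card = d := by simp
  -- sum bound
  have hsum : -2 * (d:ℝ)^3 / M^2 ≤ ∑ i ∈ Finset.Icc 1 d, (-(2*((i:ℝ)/M)^2)) := by
    have hsq : ∑ i ∈ Finset.Icc 1 d, ((i:ℝ))^2 ≤ (d:ℝ)^3 := by
      calc ∑ i ∈ Finset.Icc 1 d, ((i:ℝ))^2 ≤ ∑ i ∈ Finset.Icc 1 d, ((d:ℝ))^2 := by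
            apply Finset.sum_le_sum
            intro i hi
            have h1 : (i:ℝ) ≤ (d:ℝ) := by exact_mod_cast (Finset.mem_Icc.mp hi).2
            have h2 : (0:ℝ) ≤ (i:ℝ) := Nat.cast_nonneg i
            nlinarith
        _ = (d:ℝ) * (d:ℝ)^2 := by rw [Finset.sum_const, hcard]; push_cast; ring
        _ = (d:ℝ)^3 := by ring
    have hexpand : ∑ i ∈ Finset.Icc 1 d, (-(2*((i:ℝ)/M)^2))
        = -2 * (∑ i ∈ Finset.Icc 1 d, ((i:ℝ))^2) / M^2 := by
      rw [Finset.mul_sum, Finset.sum_div]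
      apply Finset.sum_congr rfl
      intro i _
      field_simp
    rw [hexpand]
    have hM2 : (0:ℝ) < M^2 := by positivity
    exact (div_le_div_iff_of_pos_right hM2).mpr (by linarith)
  -- product lower bound
  have hPlow : (M^2)^d * E ≤ ∏ i ∈ Finset.Icc 1 d, (M ^ 2 - (i : ℝ) ^ 2) := by
    calc (M^2)^d * E ≤ (M^2)^d * Real.exp (∑ i ∈ Finset.Icc 1 d, (-(2*((i:ℝ)/M)^2))) := by
          exact mul_le_mul_of_nonneg_left (Real.exp_le_exp.mpr hsum) (by positivity)
      _ = ∏ i ∈ Finset.Icc 1 d, (M^2 * Real.exp (-(2*((i:ℝ)/M)^2))) := by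
          rw [Finset.prod_mul_distrib, Finset.prod_const, hcard, Real.exp_sum]
      _ ≤ _ := hprod
  -- coefficient bound
  have hcoef : (2*(d:ℝ)+1) * C^2 ≤ 4^(2*d+1) := by
    have h := lemA d
    rw [Nat.centralBinom] at h
    have h' : (((2*d+1) * (Nat.choose (2*d) d)^2 : ℕ) : ℝ) ≤ ((16^d : ℕ) : ℝ) := by
      exact_mod_cast h
    push_cast at h'
    rw [← hCdef] at h'
    have h16 : (16:ℝ)^d ≤ 4^(2*d+1) := by
      rw [pow_succ, pow_mul]
      norm_num
    push_cast
    linarith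
  have hMpow : M^(2*d+1) = M * (M^2)^d := by rw [pow_succ, pow_mul]; ring
  have hpos : (0:ℝ) < M * (M^2)^d * E := by positivity
  calc (M / 4) ^ (2 * d + 1) * E
      = (M * (M^2)^d * E) / 4^(2*d+1) := by rw [div_pow, hMpow]; ring
    _ ≤ (M * (M^2)^d * E) / ((2*(d:ℝ)+1) * C^2) :=
        div_le_div_of_nonneg_left hpos.le (by positivity) hcoef
    _ = C⁻¹ ^ 2 * (M * ((M^2)^d * E)) / (2*(d:ℝ)+1) := by
        field_simp
    _ ≤ C⁻¹ ^ 2 * (M * ∏ i ∈ Finset.Icc 1 d, (M ^ 2 - (i : ℝ) ^ 2)) / (2*(d:ℝ)+1) := by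
        gcongr
end

section
/- Let n be a positive integer, 0 < p < 1, N = np(1-p) - 1 > 0, μ = ⌊pn⌋, and let ℓ be an integer with 1 ≤ ℓ ≤ (n-μ)/2. Then P(X = μ) ≤ exp(3ℓ²/(2N)) · P(X = μ + ℓ), where X ~ Bin(n,p). -/
noncomputable def binPMF (n : ℕ) (p : ℝ) (x : ℕ) : ℝ :=
  (n.choose x : ℝ) * p ^ x * (1 - p) ^ (n - x)

set_option maxHeartbeats 1600000 in
lemma stmt7_aux (n μ ℓ : ℕ) (p : ℝ) (hp0 : 0 < p) (hp1 : p < 1)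
    (hN1 : 1 < (n : ℝ) * p * (1 - p))
    (hℓ1 : 1 ≤ ℓ) (hμle : (μ : ℝ) ≤ p * n) (h2ℓn : μ + 2 * ℓ ≤ n) :
    (n.choose μ : ℝ) * p ^ μ * (1 - p) ^ (n - μ) ≤
      Real.exp (3 * (ℓ : ℝ) ^ 2 / (2 * ((n : ℝ) * p * (1 - p) - 1))) *
        ((n.choose (μ + ℓ) : ℝ) * p ^ (μ + ℓ) * (1 - p) ^ (n - (μ + ℓ))) := by
  have hq : (0:ℝ) < 1 - p := by linarith
  have h2ℓ : (2 * (ℓ:ℝ)) ≤ (n : ℝ) - μ := by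
    have : ((μ + 2*ℓ : ℕ) : ℝ) ≤ (n:ℝ) := by exact_mod_cast h2ℓn
    push_cast at this; linarith
  set N1 : ℝ := (n:ℝ) * p * (1 - p) with hN1def
  clear_value N1
  show binPMF n p μ ≤ _ * binPMF n p (μ + ℓ)
  set b : ℕ → ℝ := binPMF n p with hbdef
  clear_value b
  have hbpos : ∀ x, x ≤ n → 0 < b x := by
    intro x hx
    have h : 0 < (n.choose x : ℝ) := by exact_mod_cast Nat.choose_pos hx
    simp only [hbdef, binPMF]
    positivity
  have hratio : ∀ x, x < n →
      b x * (((n:ℝ) - x) * p) = b (x+1) * (((x:ℝ) + 1) * (1 - p)) := by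
    intro x hx
    have hc : ((n.choose (x+1)) : ℝ) * ((x:ℝ) + 1) = (n.choose x : ℝ) * ((n:ℝ) - x) := by
      have h := congrArg (Nat.cast : ℕ → ℝ) (Nat.choose_succ_right_eq n x)
      push_cast [Nat.cast_sub hx.le] at h
      linarith [h]
    have hpow : ((1:ℝ) - p) ^ (n - x) = (1 - p) ^ (n - (x+1)) * (1 - p) := by
      rw [← pow_succ]; congr 1; omega
    simp only [hbdef, binPMF]
    rw [hpow, pow_succ]
    push_cast
    linear_combination (-(p ^ x * p * (1 - p) ^ (n - (x+1)) * (1 - p))) * hc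
  set c : ℝ := 2 * ℓ / (N1 * (ℓ + 1)) with hcdef
  clear_value c
  have hℓpos : (0:ℝ) < ℓ := by exact_mod_cast hℓ1
  have hN1pos : (0:ℝ) < N1 := by linarith
  have hcpos : 0 < c := by rw [hcdef]; positivity
  have hstep : ∀ j, j < ℓ → b (μ + j) ≤ Real.exp (c * ((j:ℝ) + 1)) * b (μ + j + 1) := by
    intro j hj
    have hxn : μ + j < n := by omega
    have hxℝ : ((μ + j : ℕ):ℝ) = (μ:ℝ) + j := by push_cast; ring
    set den : ℝ := ((n:ℝ) - (μ + j : ℕ)) * p with hden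
    set num : ℝ := (((μ + j : ℕ):ℝ) + 1) * (1 - p) with hnum
    have hxltn : ((μ + j : ℕ):ℝ) < n := by exact_mod_cast hxn
    have hdenpos : 0 < den := mul_pos (by linarith) hp0
    have hjℓ : (j:ℝ) ≤ (ℓ:ℝ) - 1 := by
      have : (j:ℝ) + 1 ≤ (ℓ:ℝ) := by exact_mod_cast hj
      linarith
    have hD : N1 * ((ℓ:ℝ) + 1) / (2 * ℓ) ≤ den := by
      rw [div_le_iff₀ (by positivity)]
      have h1 : (n:ℝ) - (μ + j : ℕ) ≥ (n:ℝ) - μ - ((ℓ:ℝ) - 1) := by rw [hxℝ]; linarith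
      have h2 : 2 * (ℓ:ℝ) * ((n:ℝ) - μ - ((ℓ:ℝ)-1)) ≥ ((n:ℝ) - μ) * ((ℓ:ℝ)+1) := by
        nlinarith [mul_nonneg (sub_nonneg.2 (by exact_mod_cast hℓ1 : (1:ℝ) ≤ ℓ))
          (sub_nonneg.2 h2ℓ)]
      have h3 : ((n:ℝ) - μ) * p ≥ N1 := by nlinarith
      nlinarith [mul_le_mul_of_nonneg_left h1 (le_of_lt (by positivity : (0:ℝ) < 2 * (ℓ:ℝ) * p))]
    have hDpos : 0 < N1 * ((ℓ:ℝ) + 1) / (2 * ℓ) := by positivity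
    have hnd : num ≤ den + ((j:ℝ) + 1) := by
      simp only [hnum, hden, hxℝ]
      nlinarith
    have hkey : num ≤ Real.exp (c * ((j:ℝ) + 1)) * den := by
      have h1 : num ≤ den * (1 + ((j:ℝ)+1) / den) := by
        rw [mul_add, mul_one, mul_div_cancel₀ _ (ne_of_gt hdenpos)]
        linarith
      have h2 : 1 + ((j:ℝ)+1) / den ≤ Real.exp (((j:ℝ)+1) / den) := by
        have := Real.add_one_le_exp (((j:ℝ)+1) / den)
        linarith
      have h3 : ((j:ℝ)+1) / den ≤ ((j:ℝ)+1) / (N1 * ((ℓ:ℝ) + 1) / (2 * ℓ)) :=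
        div_le_div_of_nonneg_left (by positivity) hDpos hD
      have h4 : ((j:ℝ)+1) / (N1 * ((ℓ:ℝ) + 1) / (2 * ℓ)) = c * ((j:ℝ)+1) := by
        rw [hcdef]; field_simp
      calc num ≤ den * (1 + ((j:ℝ)+1)/den) := h1
        _ ≤ den * Real.exp (((j:ℝ)+1)/den) := mul_le_mul_of_nonneg_left h2 hdenpos.le
        _ ≤ den * Real.exp (c * ((j:ℝ)+1)) := by
            refine mul_le_mul_of_nonneg_left (Real.exp_le_exp.2 ?_) hdenpos.le
            rw [← h4]; exact h3
        _ = Real.exp (c * ((j:ℝ)+1)) * den := by ring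
    have hb1 : 0 < b (μ + j + 1) := hbpos _ (by omega)
    have hrx := hratio (μ + j) hxn
    have hmul : b (μ + j) * den ≤ (Real.exp (c * ((j:ℝ)+1)) * b (μ + j + 1)) * den := by
      calc b (μ + j) * den = b (μ + j + 1) * num := hrx
        _ ≤ b (μ + j + 1) * (Real.exp (c * ((j:ℝ)+1)) * den) :=
            mul_le_mul_of_nonneg_left hkey hb1.le
        _ = (Real.exp (c * ((j:ℝ)+1)) * b (μ + j + 1)) * den := by ring
    exact le_of_mul_le_mul_right hmul hdenpos
  have hind : ∀ j, j ≤ ℓ → b μ ≤ Real.exp (c * ((j:ℝ) * ((j:ℝ)+1) / 2)) * b (μ + j) := by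
    intro j
    induction j with
    | zero =>
      intro _
      have h0 : c * (((0:ℕ):ℝ) * (((0:ℕ):ℝ)+1) / 2) = 0 := by norm_num
      rw [h0, Real.exp_zero, one_mul, Nat.add_zero]
    | succ j ih =>
      intro hjℓ
      have hj : j < ℓ := by omega
      have h1 := ih (le_of_lt hj)
      have h2 := hstep j hj
      have heq : c * ((j:ℝ) * ((j:ℝ)+1) / 2) + c * ((j:ℝ) + 1)
          = c * (((j+1:ℕ):ℝ) * (((j+1:ℕ):ℝ)+1) / 2) := by push_cast; ring
      calc b μ ≤ Real.exp (c * ((j:ℝ) * ((j:ℝ)+1) / 2)) * b (μ + j) := h1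
        _ ≤ Real.exp (c * ((j:ℝ) * ((j:ℝ)+1) / 2)) *
            (Real.exp (c * ((j:ℝ) + 1)) * b (μ + j + 1)) :=
            mul_le_mul_of_nonneg_left h2 (Real.exp_nonneg _)
        _ = Real.exp (c * (((j+1:ℕ):ℝ) * (((j+1:ℕ):ℝ)+1) / 2)) * b (μ + (j+1)) := by
            rw [← mul_assoc, ← Real.exp_add, heq, ← add_assoc]
  have hfinal := hind ℓ le_rfl
  have hexp : c * ((ℓ:ℝ) * ((ℓ:ℝ)+1) / 2) ≤ 3 * (ℓ:ℝ)^2 / (2 * (N1 - 1)) := by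
    have heq : c * ((ℓ:ℝ) * ((ℓ:ℝ)+1) / 2) = (ℓ:ℝ)^2 / N1 := by
      rw [hcdef]; field_simp
    rw [heq, div_le_div_iff₀ (by linarith) (by linarith)]
    nlinarith [sq_nonneg (ℓ:ℝ)]
  have hb2 : 0 ≤ b (μ + ℓ) := (hbpos _ (by omega)).le
  calc b μ ≤ Real.exp (c * ((ℓ:ℝ) * ((ℓ:ℝ)+1) / 2)) * b (μ + ℓ) := hfinal
    _ ≤ Real.exp (3 * (ℓ:ℝ)^2 / (2 * (N1 - 1))) * b (μ + ℓ) :=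
        mul_le_mul_of_nonneg_right (Real.exp_le_exp.2 hexp) hb2

theorem stmt7 (n : ℕ) (hn : 0 < n) (p : ℝ) (hp0 : 0 < p) (hp1 : p < 1)
    (hN : 0 < (n : ℝ) * p * (1 - p) - 1)
    (ℓ : ℕ) (hℓ1 : 1 ≤ ℓ)
    (hℓ : (ℓ : ℝ) ≤ ((n : ℝ) - (⌊p * n⌋₊ : ℝ)) / 2) :
    (n.choose ⌊p * n⌋₊ : ℝ) * p ^ ⌊p * n⌋₊ * (1 - p) ^ (n - ⌊p * n⌋₊) ≤
      Real.exp (3 * (ℓ : ℝ) ^ 2 / (2 * ((n : ℝ) * p * (1 - p) - 1))) *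
        ((n.choose (⌊p * n⌋₊ + ℓ) : ℝ) * p ^ (⌊p * n⌋₊ + ℓ) * (1 - p) ^ (n - (⌊p * n⌋₊ + ℓ))) := by
  have hμle : ((⌊p * n⌋₊ : ℕ) : ℝ) ≤ p * n := Nat.floor_le (by positivity)
  have h2ℓn : ⌊p * n⌋₊ + 2 * ℓ ≤ n := by
    have : ((⌊p * n⌋₊ + 2*ℓ : ℕ) : ℝ) ≤ (n:ℝ) := by push_cast; linarith
    exact_mod_cast this
  exact stmt7_aux n ⌊p * n⌋₊ ℓ p hp0 hp1 (by linarith) hℓ1 hμle h2ℓn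
end

section
/- Let n be a positive integer, 0 < p < 1, N = np(1-p) - 1 > 0, μ = ⌊pn⌋, and let ℓ be an integer with 1 ≤ ℓ ≤ μ/2. Then P(X = μ) ≤ exp(8ℓ²/N) · P(X = μ - ℓ), where X ~ Bin(n,p). -/
set_option maxHeartbeats 1000000

private lemma step8 (n : ℕ) (p : ℝ) (hp0 : 0 < p) (hp1 : p < 1)
    (hN : 0 < (n : ℝ) * p * (1 - p) - 1)
    (j : ℕ) (hj : (j : ℝ) + 1 ≤ (⌊p * n⌋₊ : ℝ) / 2) :
    (n.choose (⌊p * n⌋₊ - j) : ℝ) * p ^ (⌊p * n⌋₊ - j) * (1 - p) ^ (n - (⌊p * n⌋₊ - j)) ≤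
      Real.exp (2 * ((j : ℝ) + 2) / ((n : ℝ) * p * (1 - p) - 1)) *
        ((n.choose (⌊p * n⌋₊ - (j + 1)) : ℝ) * p ^ (⌊p * n⌋₊ - (j + 1)) *
          (1 - p) ^ (n - (⌊p * n⌋₊ - (j + 1)))) := by
  set μ := ⌊p * n⌋₊ with hμdef
  have hq : 0 < 1 - p := by linarith
  have hn0 : 0 < (n : ℝ) := by nlinarith [mul_pos hp0 hq]
  have hμpn : (μ : ℝ) ≤ p * n := Nat.floor_le (by positivity)
  have hpnμ : p * n < (μ : ℝ) + 1 := Nat.lt_floor_add_one _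
  have hμn : (μ : ℝ) < n := by nlinarith
  have hjμ : j + 1 ≤ μ := by
    have h0 : (0 : ℝ) ≤ (μ : ℝ) := Nat.cast_nonneg μ
    have : ((j : ℝ) + 1) ≤ (μ : ℝ) := by linarith
    exact_mod_cast this
  set m := μ - (j + 1) with hm
  have hkm : μ - j = m + 1 := by omega
  have hmn : m + 1 ≤ n := by
    have : μ ≤ n := by exact_mod_cast hμn.le
    omega
  have hcastm : (m : ℝ) = (μ : ℝ) - (j : ℝ) - 1 := by
    rw [hm, Nat.cast_sub hjμ]; push_cast; ring
  set N := (n : ℝ) * p * (1 - p) - 1 with hNdef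
  set t := 2 * ((j : ℝ) + 2) / N with htdef
  have ht : 0 ≤ t := by positivity
  have htN : t * N = 2 * ((j : ℝ) + 2) := div_mul_cancel₀ _ (ne_of_gt hN)
  -- choose identity
  have hmn' : m ≤ n := by omega
  have hch : (n.choose (m + 1) : ℝ) * ((m : ℝ) + 1) = (n.choose m : ℝ) * ((n : ℝ) - m) := by
    have h := Nat.choose_succ_right_eq n m
    have h2 : ((n.choose (m + 1) * (m + 1) : ℕ) : ℝ) = ((n.choose m * (n - m) : ℕ) : ℝ) := by
      exact_mod_cast congrArg (Nat.cast : ℕ → ℝ) h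
    push_cast [Nat.cast_sub hmn'] at h2
    linarith
  have he : n - m = (n - (m + 1)) + 1 := by omega
  -- master identity
  have hid : ((m : ℝ) + 1) * (1 - p) *
      ((n.choose (m + 1) : ℝ) * p ^ (m + 1) * (1 - p) ^ (n - (m + 1))) =
      ((n : ℝ) - m) * p * ((n.choose m : ℝ) * p ^ m * (1 - p) ^ (n - m)) := by
    rw [he, pow_succ, pow_succ]
    linear_combination ((1 - p) * (p ^ m * p) * (1 - p) ^ (n - (m + 1))) * hch
  -- numeric inequality
  have hμN : N ≤ (μ : ℝ) * (1 - p) := by nlinarith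
  have hk2 : N ≤ 2 * (((m : ℝ) + 1) * (1 - p)) := by
    have hh : (μ : ℝ) / 2 ≤ (μ : ℝ) - j := by linarith
    nlinarith [mul_le_mul_of_nonneg_right hh hq.le]
  have h2 : (j : ℝ) + 2 ≤ t * (((m : ℝ) + 1) * (1 - p)) := by
    have := mul_le_mul_of_nonneg_left hk2 ht
    linarith
  have h1 : ((n : ℝ) - m) * p ≤ ((m : ℝ) + 1) * (1 - p) + ((j : ℝ) + 2) := by
    rw [hcastm]; nlinarith
  have hnum : ((n : ℝ) - m) * p ≤ Real.exp t * (((m : ℝ) + 1) * (1 - p)) := by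
    have hexp := Real.add_one_le_exp t
    have h3 : (1 + t) * (((m : ℝ) + 1) * (1 - p)) ≤
        Real.exp t * (((m : ℝ) + 1) * (1 - p)) :=
      mul_le_mul_of_nonneg_right (by linarith) (by positivity)
    linarith
  -- assemble
  have hB : (0 : ℝ) ≤ (n.choose m : ℝ) * p ^ m * (1 - p) ^ (n - m) :=
    mul_nonneg (mul_nonneg (Nat.cast_nonneg _) (pow_nonneg hp0.le _)) (pow_nonneg hq.le _)
  have hk : (0 : ℝ) < ((m : ℝ) + 1) * (1 - p) := by positivity
  rw [hkm]
  have h4 : ((m : ℝ) + 1) * (1 - p) *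
      ((n.choose (m + 1) : ℝ) * p ^ (m + 1) * (1 - p) ^ (n - (m + 1))) ≤
      ((m : ℝ) + 1) * (1 - p) *
        (Real.exp t * ((n.choose m : ℝ) * p ^ m * (1 - p) ^ (n - m))) := by
    have := mul_le_mul_of_nonneg_right hnum hB
    nlinarith [hid]
  exact le_of_mul_le_mul_left h4 hk

private lemma chain8 (n : ℕ) (p : ℝ) (hp0 : 0 < p) (hp1 : p < 1)
    (hN : 0 < (n : ℝ) * p * (1 - p) - 1) :
    ∀ ℓ : ℕ, 1 ≤ ℓ → (ℓ : ℝ) ≤ (⌊p * n⌋₊ : ℝ) / 2 →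
    (n.choose ⌊p * n⌋₊ : ℝ) * p ^ ⌊p * n⌋₊ * (1 - p) ^ (n - ⌊p * n⌋₊) ≤
      Real.exp (((ℓ : ℝ) ^ 2 + 3 * ℓ) / ((n : ℝ) * p * (1 - p) - 1)) *
        ((n.choose (⌊p * n⌋₊ - ℓ) : ℝ) * p ^ (⌊p * n⌋₊ - ℓ) *
          (1 - p) ^ (n - (⌊p * n⌋₊ - ℓ))) := by
  intro ℓ hℓ1
  induction ℓ, hℓ1 using Nat.le_induction with
  | base =>
    intro h
    have := step8 n p hp0 hp1 hN 0 (by push_cast at h ⊢; linarith)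
    norm_num at this ⊢
    convert this using 3
  | succ ℓ hℓ' ih =>
    intro h
    have h' : (ℓ : ℝ) ≤ (⌊p * n⌋₊ : ℝ) / 2 := by push_cast at h ⊢; linarith
    have h1 := ih h'
    have h2 := step8 n p hp0 hp1 hN ℓ (by push_cast at h ⊢; linarith)
    have h3 := mul_le_mul_of_nonneg_left h2
      (Real.exp_nonneg (((ℓ : ℝ) ^ 2 + 3 * ℓ) / ((n : ℝ) * p * (1 - p) - 1)))
    refine h1.trans (h3.trans_eq ?_)
    rw [← mul_assoc, ← Real.exp_add, ← add_div]
    congr 2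
    push_cast
    ring

theorem stmt8 (n : ℕ) (hn : 0 < n) (p : ℝ) (hp0 : 0 < p) (hp1 : p < 1)
    (hN : 0 < (n : ℝ) * p * (1 - p) - 1)
    (ℓ : ℕ) (hℓ1 : 1 ≤ ℓ)
    (hℓ : (ℓ : ℝ) ≤ (⌊p * n⌋₊ : ℝ) / 2) :
    (n.choose ⌊p * n⌋₊ : ℝ) * p ^ ⌊p * n⌋₊ * (1 - p) ^ (n - ⌊p * n⌋₊) ≤
      Real.exp (8 * (ℓ : ℝ) ^ 2 / ((n : ℝ) * p * (1 - p) - 1)) *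
        ((n.choose (⌊p * n⌋₊ - ℓ) : ℝ) * p ^ (⌊p * n⌋₊ - ℓ) * (1 - p) ^ (n - (⌊p * n⌋₊ - ℓ))) := by
  have h1 := chain8 n p hp0 hp1 hN ℓ hℓ1 hℓ
  have hB : (0 : ℝ) ≤ (n.choose (⌊p * n⌋₊ - ℓ) : ℝ) * p ^ (⌊p * n⌋₊ - ℓ) *
      (1 - p) ^ (n - (⌊p * n⌋₊ - ℓ)) := by
    exact mul_nonneg (mul_nonneg (Nat.cast_nonneg _) (pow_nonneg hp0.le _))
      (pow_nonneg (by linarith) _)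
  have hℓr : (1 : ℝ) ≤ (ℓ : ℝ) := by exact_mod_cast hℓ1
  have hexp : Real.exp (((ℓ : ℝ) ^ 2 + 3 * ℓ) / ((n : ℝ) * p * (1 - p) - 1)) ≤
      Real.exp (8 * (ℓ : ℝ) ^ 2 / ((n : ℝ) * p * (1 - p) - 1)) := by
    rw [Real.exp_le_exp]
    gcongr
    nlinarith
  exact h1.trans (mul_le_mul_of_nonneg_right hexp hB)
end

section
/- Let n, k be positive integers with k even, 0 < p < 1, and suppose that for all integers 0 ≤ i < k/2 one has binom(n,i) p^{n-i} (1-p)^i ≤ (1/2) binom(n, i+1) p^{n-i-1} (1-p)^{i+1}. Then c√k (pk/(2e(1-p)n))^{k/2} ≤ p^n / P(Bin(n,1-p) ≤ k/2) ≤ C√k (pk/(2e(1-p)n))^{k/2} e^{k²/(2n)}, for universal constants c, C > 0 (and assuming k ≤ C'n(1-p) for a suitable C'). -/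
open Finset

open Stirling in
lemma stir_lb_aux (j : ℕ) : Real.sqrt Real.pi ≤ stirlingSeq (j + 1) := by
  have hlim : Filter.Tendsto (fun n => stirlingSeq (n + 1)) Filter.atTop
      (nhds (Real.sqrt Real.pi)) :=
    (Filter.tendsto_add_atTop_iff_nat 1).mpr tendsto_stirlingSeq_sqrt_pi
  exact stirlingSeq'_antitone.le_of_tendsto hlim j

lemma sqrt2_facts : 1 ≤ Real.sqrt 2 ∧ Real.sqrt 2 ≤ 2 := by
  have h := Real.sq_sqrt (by norm_num : (0:ℝ) ≤ 2)
  have h0 := Real.sqrt_nonneg 2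
  constructor <;> nlinarith

lemma sqrtpi_ge_one : 1 ≤ Real.sqrt Real.pi := by
  have h := Real.sq_sqrt Real.pi_nonneg
  have h0 := Real.sqrt_nonneg Real.pi
  nlinarith [Real.pi_gt_three]

lemma fact_lb (m : ℕ) (hm : 1 ≤ m) :
    Real.sqrt m * ((m : ℝ) / Real.exp 1) ^ m ≤ (m.factorial : ℝ) := by
  obtain ⟨j, rfl⟩ : ∃ j, m = j + 1 := ⟨m - 1, by omega⟩
  have h1 := stir_lb_aux j
  have hm0 : (0:ℝ) < ((j + 1 : ℕ) : ℝ) := by positivity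
  have hd : (0:ℝ) < Real.sqrt (2 * ((j + 1 : ℕ) : ℝ)) * (((j + 1 : ℕ) : ℝ) / Real.exp 1) ^ (j + 1) := by
    have h2 : (0:ℝ) < Real.sqrt (2 * ((j + 1 : ℕ) : ℝ)) := Real.sqrt_pos.mpr (by positivity)
    positivity
  rw [Stirling.stirlingSeq, le_div_iff₀ hd] at h1
  have hs : Real.sqrt (2 * ((j + 1 : ℕ) : ℝ)) = Real.sqrt 2 * Real.sqrt ((j + 1 : ℕ) : ℝ) :=
    Real.sqrt_mul (by norm_num) _
  rw [hs] at h1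
  have hA : (0:ℝ) ≤ Real.sqrt ((j + 1 : ℕ) : ℝ) * (((j + 1 : ℕ) : ℝ) / Real.exp 1) ^ (j + 1) := by
    positivity
  have h12 : 1 ≤ Real.sqrt Real.pi * Real.sqrt 2 := by
    nlinarith [sqrtpi_ge_one, sqrt2_facts.1]
  calc Real.sqrt ((j + 1 : ℕ) : ℝ) * (((j + 1 : ℕ) : ℝ) / Real.exp 1) ^ (j + 1)
      = 1 * (Real.sqrt ((j + 1 : ℕ) : ℝ) * (((j + 1 : ℕ) : ℝ) / Real.exp 1) ^ (j + 1)) := by ring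
    _ ≤ (Real.sqrt Real.pi * Real.sqrt 2) *
        (Real.sqrt ((j + 1 : ℕ) : ℝ) * (((j + 1 : ℕ) : ℝ) / Real.exp 1) ^ (j + 1)) :=
      mul_le_mul_of_nonneg_right h12 hA
    _ = Real.sqrt Real.pi * (Real.sqrt 2 * Real.sqrt ((j + 1 : ℕ) : ℝ) *
        (((j + 1 : ℕ) : ℝ) / Real.exp 1) ^ (j + 1)) := by ring
    _ ≤ ((j+1).factorial : ℝ) := h1

lemma fact_ub (m : ℕ) (hm : 1 ≤ m) :
    (m.factorial : ℝ) ≤ Real.exp 1 * (Real.sqrt m * ((m : ℝ) / Real.exp 1) ^ m) := by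
  obtain ⟨j, rfl⟩ : ∃ j, m = j + 1 := ⟨m - 1, by omega⟩
  have h1 : Stirling.stirlingSeq (j + 1) ≤ Stirling.stirlingSeq (0 + 1) :=
    Stirling.stirlingSeq'_antitone (Nat.zero_le j)
  rw [show (0 + 1 : ℕ) = 1 from rfl, Stirling.stirlingSeq_one] at h1
  have hm0 : (0:ℝ) < ((j + 1 : ℕ) : ℝ) := by positivity
  have hd : (0:ℝ) < Real.sqrt (2 * ((j + 1 : ℕ) : ℝ)) * (((j + 1 : ℕ) : ℝ) / Real.exp 1) ^ (j + 1) := by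
    have h2 : (0:ℝ) < Real.sqrt (2 * ((j + 1 : ℕ) : ℝ)) := Real.sqrt_pos.mpr (by positivity)
    positivity
  rw [Stirling.stirlingSeq, div_le_iff₀ hd] at h1
  have hs : Real.sqrt (2 * ((j + 1 : ℕ) : ℝ)) = Real.sqrt 2 * Real.sqrt ((j + 1 : ℕ) : ℝ) :=
    Real.sqrt_mul (by norm_num) _
  rw [hs] at h1
  have hs2 : (0:ℝ) < Real.sqrt 2 := by nlinarith [sqrt2_facts.1]
  calc ((j+1).factorial : ℝ) ≤ Real.exp 1 / Real.sqrt 2 *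
        (Real.sqrt 2 * Real.sqrt ((j + 1 : ℕ) : ℝ) * (((j + 1 : ℕ) : ℝ) / Real.exp 1) ^ (j + 1)) := h1
    _ = Real.exp 1 * (Real.sqrt ((j + 1 : ℕ) : ℝ) * (((j + 1 : ℕ) : ℝ) / Real.exp 1) ^ (j + 1)) := by
        field_simp

set_option maxHeartbeats 1000000 in
theorem stmt11 :
    ∃ c C C' : ℝ, 0 < c ∧ 0 < C ∧ 0 < C' ∧
      ∀ (n k : ℕ) (p : ℝ), 0 < n → 0 < k → Even k → 0 < p → p < 1 →
        (k : ℝ) ≤ C' * n * (1 - p) →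
        (∀ i : ℕ, i < k / 2 →
          (n.choose i : ℝ) * p ^ (n - i) * (1 - p) ^ i ≤
            1 / 2 * ((n.choose (i + 1) : ℝ) * p ^ (n - (i + 1)) * (1 - p) ^ (i + 1))) →
        c * Real.sqrt k * (p * k / (2 * Real.exp 1 * (1 - p) * n)) ^ (k / 2) ≤
            p ^ n / (∑ i ∈ Finset.range (k / 2 + 1),
              (n.choose i : ℝ) * (1 - p) ^ i * p ^ (n - i)) ∧
          p ^ n / (∑ i ∈ Finset.range (k / 2 + 1),
              (n.choose i : ℝ) * (1 - p) ^ i * p ^ (n - i)) ≤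
            C * Real.sqrt k * (p * k / (2 * Real.exp 1 * (1 - p) * n)) ^ (k / 2) *
              Real.exp ((k : ℝ) ^ 2 / (2 * n)) := by
  refine ⟨1/4, Real.exp 1, 1, by norm_num, Real.exp_pos 1, one_pos, ?_⟩
  intro n k p hn hk hke hp hp1 hkC hyp
  set m := k / 2 with hm_def
  clear_value m
  obtain ⟨r, hr⟩ := hke
  have h2m : 2 * m = k := by omega
  have hm1 : 1 ≤ m := by omega
  have hp0 : 0 < 1 - p := by linarith
  have hn0 : (0:ℝ) < n := by exact_mod_cast hn
  have hkR : (k : ℝ) = 2 * m := by exact_mod_cast h2m.symm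
  have hkn : (k : ℝ) ≤ n := by nlinarith [hkC, Nat.cast_nonneg (α := ℝ) k]
  have hkn' : k ≤ n := by exact_mod_cast hkn
  have hmn : 2 * m ≤ n := by omega
  have hmn' : m ≤ n := by omega
  have hm0 : (0:ℝ) < m := by exact_mod_cast hm1
  set t : ℕ → ℝ := fun i => (n.choose i : ℝ) * (1 - p) ^ i * p ^ (n - i) with ht
  have hc0 : (0:ℝ) < (n.choose m : ℝ) := by exact_mod_cast Nat.choose_pos hmn'
  have htpos : 0 < t m := by simp only [ht]; positivity
  have htnn : ∀ i, 0 ≤ t i := fun i => by simp only [ht]; positivity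
  have hTS : t m ≤ ∑ i ∈ Finset.range (m + 1), t i :=
    Finset.single_le_sum (fun i _ => htnn i) (self_mem_range_succ m)
  have hstep : ∀ i, i < m → t i ≤ 1/2 * t (i + 1) := by
    intro i hi
    calc t i = (n.choose i : ℝ) * p ^ (n - i) * (1 - p) ^ i := by simp only [ht]; ring
      _ ≤ 1/2 * ((n.choose (i+1) : ℝ) * p ^ (n - (i+1)) * (1 - p) ^ (i+1)) := hyp i hi
      _ = 1/2 * t (i + 1) := by simp only [ht]; ring
  have hgeo : ∀ j, j ≤ m → t (m - j) ≤ (1/2) ^ j * t m := by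
    intro j
    induction j with
    | zero => intro _; simp
    | succ j ih =>
      intro hj
      have h1 : t (m - (j+1)) ≤ 1/2 * t (m - (j+1) + 1) := hstep _ (by omega)
      have h2 : m - (j+1) + 1 = m - j := by omega
      rw [h2] at h1
      have h3 := ih (by omega)
      calc t (m - (j+1)) ≤ 1/2 * t (m - j) := h1
        _ ≤ 1/2 * ((1/2) ^ j * t m) := by linarith
        _ = (1/2) ^ (j+1) * t m := by ring
  have hS2 : ∑ i ∈ Finset.range (m + 1), t i ≤ 2 * t m := by
    calc ∑ i ∈ Finset.range (m + 1), t i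
        = ∑ j ∈ Finset.range (m + 1), t (m + 1 - 1 - j) := (Finset.sum_range_reflect t (m+1)).symm
      _ ≤ ∑ j ∈ Finset.range (m + 1), (1/2 : ℝ) ^ j * t m := by
          refine Finset.sum_le_sum fun j hj => ?_
          have hjm : j ≤ m := Nat.lt_succ_iff.mp (Finset.mem_range.mp hj)
          have := hgeo j hjm
          simpa using this
      _ = (∑ j ∈ Finset.range (m + 1), (1/2 : ℝ) ^ j) * t m := by rw [Finset.sum_mul]
      _ ≤ 2 * t m := mul_le_mul_of_nonneg_right (sum_geometric_two_le _) htpos.le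
  have hSpos : 0 < ∑ i ∈ Finset.range (m + 1), t i := lt_of_lt_of_le htpos hTS
  -- binomial bounds
  have hcf : (m.factorial : ℝ) * (n.choose m : ℝ) ≤ (n : ℝ) ^ m := by
    have h1 : m.factorial * n.choose m ≤ n ^ m := by
      rw [← Nat.descFactorial_eq_factorial_mul_choose]
      exact Nat.descFactorial_le_pow n m
    exact_mod_cast h1
  have hcfl : ((n : ℝ) - m) ^ m ≤ (m.factorial : ℝ) * (n.choose m : ℝ) := by
    have h1 : (n - m) ^ m ≤ m.factorial * n.choose m := by
      calc (n - m) ^ m ≤ (n + 1 - m) ^ m := Nat.pow_le_pow_left (by omega) m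
        _ ≤ n.descFactorial m := Nat.pow_sub_le_descFactorial n m
        _ = m.factorial * n.choose m := Nat.descFactorial_eq_factorial_mul_choose n m
    calc ((n : ℝ) - m) ^ m = (((n - m : ℕ) : ℝ)) ^ m := by
          rw [Nat.cast_sub hmn']
      _ ≤ (m.factorial : ℝ) * (n.choose m : ℝ) := by exact_mod_cast h1
  have hfl := fact_lb m hm1
  have hfu := fact_ub m hm1
  have hcu : (n.choose m : ℝ) * (Real.sqrt m * ((m : ℝ) / Real.exp 1) ^ m) ≤ (n : ℝ) ^ m := by
    calc (n.choose m : ℝ) * (Real.sqrt m * ((m : ℝ) / Real.exp 1) ^ m)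
        ≤ (n.choose m : ℝ) * (m.factorial : ℝ) := mul_le_mul_of_nonneg_left hfl hc0.le
      _ = (m.factorial : ℝ) * (n.choose m : ℝ) := by ring
      _ ≤ (n : ℝ) ^ m := hcf
  have hcl : ((n : ℝ) - m) ^ m ≤
      (n.choose m : ℝ) * (Real.exp 1 * (Real.sqrt m * ((m : ℝ) / Real.exp 1) ^ m)) := by
    calc ((n : ℝ) - m) ^ m ≤ (m.factorial : ℝ) * (n.choose m : ℝ) := hcfl
      _ = (n.choose m : ℝ) * (m.factorial : ℝ) := by ring
      _ ≤ _ := mul_le_mul_of_nonneg_left hfu hc0.le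
  -- exponential bound
  have hmn2 : (m : ℝ) / n ≤ 1/2 := by
    rw [div_le_iff₀ hn0]
    have h1 : (2 * (m:ℝ)) ≤ n := by exact_mod_cast hmn
    linarith
  have hxnn : (0:ℝ) ≤ (m : ℝ) / n := by positivity
  have hx : Real.exp (-(2 * ((m : ℝ) / n))) ≤ 1 - (m : ℝ) / n := by
    set x := (m : ℝ) / n with hxdef
    have h1 : 1 + 2 * x ≤ Real.exp (2 * x) := by
      have := Real.add_one_le_exp (2 * x); linarith
    rw [Real.exp_neg, inv_eq_one_div, div_le_iff₀ (Real.exp_pos _)]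
    nlinarith [Real.exp_pos (2 * x)]
  have h4 : Real.exp (-(2 * ((m : ℝ) / n))) ^ m ≤ (1 - (m : ℝ) / n) ^ m :=
    pow_le_pow_left₀ (Real.exp_pos _).le hx m
  have h5 : Real.exp (-(2 * ((m : ℝ) / n))) ^ m = Real.exp (-((k : ℝ) ^ 2 / (2 * n))) := by
    rw [← Real.exp_nat_mul]
    congr 1
    rw [hkR]
    field_simp
  have h6 : (1 - (m : ℝ) / n) ^ m * (n : ℝ) ^ m = ((n : ℝ) - m) ^ m := by
    rw [← mul_pow]
    congr 1
    field_simp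
  have hxm : Real.exp (-((k : ℝ) ^ 2 / (2 * n))) * (n : ℝ) ^ m ≤ ((n : ℝ) - m) ^ m := by
    rw [← h5, ← h6]
    exact mul_le_mul_of_nonneg_right h4 (by positivity)
  -- key facts
  have hnm : (0:ℝ) < (n : ℝ) ^ m := by positivity
  have hpow : ((m : ℝ) / (Real.exp 1 * n)) ^ m * (n : ℝ) ^ m = ((m : ℝ) / Real.exp 1) ^ m := by
    rw [← mul_pow]
    congr 1
    field_simp
  have hsqrtk : Real.sqrt k = Real.sqrt 2 * Real.sqrt m := by
    rw [hkR, Real.sqrt_mul (by norm_num)]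
  have hKeyLB : (n.choose m : ℝ) * (Real.sqrt k * ((m : ℝ) / (Real.exp 1 * n)) ^ m) ≤ 2 := by
    rw [← mul_le_mul_iff_of_pos_right hnm]
    calc (n.choose m : ℝ) * (Real.sqrt k * ((m : ℝ) / (Real.exp 1 * n)) ^ m) * (n : ℝ) ^ m
        = Real.sqrt 2 * ((n.choose m : ℝ) *
            (Real.sqrt m * (((m : ℝ) / (Real.exp 1 * n)) ^ m * (n : ℝ) ^ m))) := by
          rw [hsqrtk]; ring
      _ = Real.sqrt 2 * ((n.choose m : ℝ) * (Real.sqrt m * ((m : ℝ) / Real.exp 1) ^ m)) := by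
          rw [hpow]
      _ ≤ Real.sqrt 2 * (n : ℝ) ^ m := mul_le_mul_of_nonneg_left hcu (Real.sqrt_nonneg 2)
      _ ≤ 2 * (n : ℝ) ^ m := mul_le_mul_of_nonneg_right sqrt2_facts.2 hnm.le
  have hmk : Real.sqrt m ≤ Real.sqrt k := by
    apply Real.sqrt_le_sqrt
    rw [hkR]; linarith
  have hKeyUB : Real.exp (-((k : ℝ) ^ 2 / (2 * n))) ≤
      (n.choose m : ℝ) * (Real.exp 1 * (Real.sqrt k * ((m : ℝ) / (Real.exp 1 * n)) ^ m)) := by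
    rw [← mul_le_mul_iff_of_pos_right hnm]
    calc Real.exp (-((k : ℝ) ^ 2 / (2 * n))) * (n : ℝ) ^ m
        ≤ ((n : ℝ) - m) ^ m := hxm
      _ ≤ (n.choose m : ℝ) * (Real.exp 1 * (Real.sqrt m * ((m : ℝ) / Real.exp 1) ^ m)) := hcl
      _ ≤ (n.choose m : ℝ) * (Real.exp 1 * (Real.sqrt k * ((m : ℝ) / Real.exp 1) ^ m)) := by
          gcongr
      _ = (n.choose m : ℝ) * (Real.exp 1 * (Real.sqrt k * ((m : ℝ) / (Real.exp 1 * n)) ^ m)) *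
            (n : ℝ) ^ m := by rw [← hpow]; ring
  -- the key identity
  have hE : p * (k : ℝ) / (2 * Real.exp 1 * (1 - p) * n) =
      (p / (1 - p)) * ((m : ℝ) / (Real.exp 1 * n)) := by
    rw [hkR]
    field_simp
  have hpn : p ^ n = p ^ (n - m) * p ^ m := by
    rw [← pow_add]
    congr 1
    omega
  have hET : (p * (k : ℝ) / (2 * Real.exp 1 * (1 - p) * n)) ^ m * t m =
      (n.choose m : ℝ) * ((m : ℝ) / (Real.exp 1 * n)) ^ m * p ^ n := by
    rw [hE, mul_pow, hpn]
    simp only [ht]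
    rw [div_pow]
    field_simp
  have hppos : (0:ℝ) < p ^ n := pow_pos hp n
  constructor
  · -- lower bound
    have h1 : p ^ n / (2 * t m) ≤ p ^ n / ∑ i ∈ Finset.range (m + 1), t i := by
      apply div_le_div_of_nonneg_left hppos.le hSpos hS2
    refine le_trans ?_ h1
    rw [le_div_iff₀ (by positivity)]
    have h2 : 1/4 * Real.sqrt k * (p * (k : ℝ) / (2 * Real.exp 1 * (1 - p) * n)) ^ m *
        (2 * t m) = 1/2 * ((n.choose m : ℝ) *
          (Real.sqrt k * ((m : ℝ) / (Real.exp 1 * n)) ^ m)) * p ^ n := by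
      calc 1/4 * Real.sqrt k * (p * (k : ℝ) / (2 * Real.exp 1 * (1 - p) * n)) ^ m * (2 * t m)
          = 1/2 * Real.sqrt k *
            ((p * (k : ℝ) / (2 * Real.exp 1 * (1 - p) * n)) ^ m * t m) := by ring
        _ = _ := by rw [hET]; ring
    rw [h2]
    nlinarith [mul_le_mul_of_nonneg_right hKeyLB hppos.le]
  · -- upper bound
    have h1 : p ^ n / ∑ i ∈ Finset.range (m + 1), t i ≤ p ^ n / t m := by
      apply div_le_div_of_nonneg_left hppos.le htpos hTS
    refine le_trans h1 ?_
    rw [div_le_iff₀ htpos]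
    have h2 : Real.exp 1 * Real.sqrt k * (p * (k : ℝ) / (2 * Real.exp 1 * (1 - p) * n)) ^ m *
        Real.exp ((k : ℝ) ^ 2 / (2 * n)) * t m =
        ((n.choose m : ℝ) * (Real.exp 1 * (Real.sqrt k * ((m : ℝ) / (Real.exp 1 * n)) ^ m))) *
          Real.exp ((k : ℝ) ^ 2 / (2 * n)) * p ^ n := by
      calc Real.exp 1 * Real.sqrt k * (p * (k : ℝ) / (2 * Real.exp 1 * (1 - p) * n)) ^ m *
          Real.exp ((k : ℝ) ^ 2 / (2 * n)) * t m
          = Real.exp 1 * Real.sqrt k * Real.exp ((k : ℝ) ^ 2 / (2 * n)) *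
            ((p * (k : ℝ) / (2 * Real.exp 1 * (1 - p) * n)) ^ m * t m) := by ring
        _ = _ := by rw [hET]; ring
    rw [h2]
    have h3 := mul_le_mul_of_nonneg_right hKeyUB (Real.exp_pos ((k : ℝ) ^ 2 / (2 * n))).le
    rw [← Real.exp_add, neg_add_cancel, Real.exp_zero] at h3
    nlinarith [mul_le_mul_of_nonneg_right h3 hppos.le]
end

section
/- Let x be an integer, m, R positive integers with m ≥ 2R, and let a_1, ..., a_s be elements of an index set S_4 = {i : a_i ≥ x + τm} with 2s ≤ k, where τ > 4. Then ∏_{i ∈ S_4} (a_i - x)² / ((a_i - w)(a_i + 1 - w)) ≤ (τ/(τ-3))^{2s} ≤ exp(12k/τ) for any w with x + 2m ≤ w ≤ x + 3m. -/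
open Finset

theorem stmt16 (k s m R : ℕ) (hm : 0 < m) (hR : 0 < R) (hmR : 2 * R ≤ m)
    (hs : 2 * s ≤ k) (τ : ℝ) (hτ : 4 < τ)
    (x : ℤ) (a : Fin s → ℤ) (ha : ∀ i, (x : ℝ) + τ * m ≤ (a i : ℝ))
    (w : ℝ) (hw1 : (x : ℝ) + 2 * m ≤ w) (hw2 : w ≤ (x : ℝ) + 3 * m) :
    (∏ i, ((a i : ℝ) - x) ^ 2 / (((a i : ℝ) - w) * ((a i : ℝ) + 1 - w))) ≤
        (τ / (τ - 3)) ^ (2 * s) ∧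
      (τ / (τ - 3)) ^ (2 * s) ≤ Real.exp (12 * k / τ) := by
  have hm1 : (1 : ℝ) ≤ m := by exact_mod_cast hm
  have hmpos : (0 : ℝ) < m := by linarith
  have hτ3 : (0 : ℝ) < τ - 3 := by linarith
  have hτ0 : (0 : ℝ) < τ := by linarith
  constructor
  · have key : ∀ i : Fin s,
        ((a i : ℝ) - x) ^ 2 / (((a i : ℝ) - w) * ((a i : ℝ) + 1 - w)) ≤ (τ / (τ - 3)) ^ 2 := by
      intro i
      have hA : τ * m ≤ (a i : ℝ) - x := by have := ha i; linarith
      have hApos : (0 : ℝ) < (a i : ℝ) - x := by nlinarith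
      have hd1 : (τ - 3) * m ≤ (a i : ℝ) - w := by nlinarith
      have hd1pos : (0 : ℝ) < (a i : ℝ) - w := by nlinarith
      have hd2pos : (0 : ℝ) < (a i : ℝ) + 1 - w := by linarith
      have h1 : ((a i : ℝ) - x) / ((a i : ℝ) - w) ≤ τ / (τ - 3) := by
        rw [div_le_div_iff₀ hd1pos hτ3]
        nlinarith
      have h2 : ((a i : ℝ) - x) / ((a i : ℝ) + 1 - w) ≤ τ / (τ - 3) := by
        rw [div_le_div_iff₀ hd2pos hτ3]
        nlinarith
      have heq : ((a i : ℝ) - x) ^ 2 / (((a i : ℝ) - w) * ((a i : ℝ) + 1 - w))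
          = (((a i : ℝ) - x) / ((a i : ℝ) - w)) * (((a i : ℝ) - x) / ((a i : ℝ) + 1 - w)) := by
        field_simp
      rw [heq, sq]
      exact mul_le_mul h1 h2 (by positivity) (by positivity)
    calc (∏ i, ((a i : ℝ) - x) ^ 2 / (((a i : ℝ) - w) * ((a i : ℝ) + 1 - w)))
        ≤ ∏ _i : Fin s, (τ / (τ - 3)) ^ 2 := by
          apply Finset.prod_le_prod
          · intro i _
            have hA : τ * m ≤ (a i : ℝ) - x := by have := ha i; linarith
            have hd1pos : (0 : ℝ) < (a i : ℝ) - w := by nlinarith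
            have hd2pos : (0 : ℝ) < (a i : ℝ) + 1 - w := by linarith
            positivity
          · intro i _; exact key i
      _ = (τ / (τ - 3)) ^ (2 * s) := by
          rw [Finset.prod_const, Finset.card_univ, Fintype.card_fin, ← pow_mul, mul_comm]
  · have hbase : τ / (τ - 3) ≤ Real.exp (12 / τ) := by
      have h1 : τ / (τ - 3) = 1 + 3 / (τ - 3) := by field_simp; ring
      have h2 : 3 / (τ - 3) ≤ 12 / τ := by
        rw [div_le_div_iff₀ hτ3 hτ0]; nlinarith
      have h3 : (3 / (τ - 3)) + 1 ≤ Real.exp (3 / (τ - 3)) := Real.add_one_le_exp _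
      calc τ / (τ - 3) = 3 / (τ - 3) + 1 := by rw [h1]; ring
        _ ≤ Real.exp (3 / (τ - 3)) := h3
        _ ≤ Real.exp (12 / τ) := Real.exp_le_exp.mpr h2
    calc (τ / (τ - 3)) ^ (2 * s) ≤ (Real.exp (12 / τ)) ^ (2 * s) :=
          pow_le_pow_left₀ (by positivity) hbase _
      _ = Real.exp ((2 * s : ℕ) * (12 / τ)) := by rw [← Real.exp_nat_mul]
      _ ≤ Real.exp (12 * k / τ) := by
          apply Real.exp_le_exp.mpr
          have : ((2 * s : ℕ) : ℝ) ≤ (k : ℝ) := by exact_mod_cast hs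
          rw [div_eq_mul_inv (12 * (k:ℝ)), mul_assoc]
          calc ((2 * s : ℕ) : ℝ) * (12 / τ) ≤ (k : ℝ) * (12 / τ) := by
                apply mul_le_mul_of_nonneg_right this; positivity
            _ = 12 * ((k:ℝ) * τ⁻¹) := by field_simp
end
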